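/- arXiv:2302.11829 — 9 statements merged into one kernel-verified Lean document; each statement's English description precedes it below -/
import Mathlib

section
/- Let u^L : Fin m → Fin n → ℝ be a leader payoff function and (x,j) ∈ Δ_m × [n] a strategy profile. Then (x,j) is inducible with respect to u^L — i.e., there exists a follower payoff function ũ^F : Fin m → Fin n → ℝ such that (x,j) is a strong Stackelberg equilibrium of (u^L, ũ^F) — if and only if u^L(x,j) ≥ M_{[n]} = max_{y∈Δ_m} min_{k∈[n]} u^L(y,k). -/
open scoped Classical
open Finset

noncomputable section

/-- The leader's mixed-strategy simplex Δ_m. -/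
def simplex (m : ℕ) : Set (Fin m → ℝ) := stdSimplex ℝ (Fin m)

/-- Linear extension of a payoff matrix to mixed strategies: u(x,j) = ∑ i, x i * u i j. -/
def pay {m n : ℕ} (u : Fin m → Fin n → ℝ) (x : Fin m → ℝ) (j : Fin n) : ℝ :=
  ∑ i, x i * u i j

/-- Inner product on ℝ^m. -/
def dot {m : ℕ} (a x : Fin m → ℝ) : ℝ := ∑ i, a i * x i

/-- min_{j ∈ S} u(x, j). -/
def minOnS {m n : ℕ} (u : Fin m → Fin n → ℝ) (S : Set (Fin n)) (x : Fin m → ℝ) : ℝ :=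
  sInf ((fun j => pay u x j) '' S)

/-- The leader's maximin value M_S = max_{x∈Δ_m} min_{j∈S} u(x,j). -/
def Mval {m n : ℕ} (u : Fin m → Fin n → ℝ) (S : Set (Fin n)) : ℝ :=
  sSup (minOnS u S '' simplex m)

/-- The set 𝓜_S of maximin strategies. -/
def argMM {m n : ℕ} (u : Fin m → Fin n → ℝ) (S : Set (Fin n)) : Set (Fin m → ℝ) :=
  {x ∈ simplex m | minOnS u S x = Mval u S}

/-- The follower's best-response set BR(x) = argmax_j uF(x,j). -/
def BR {m n : ℕ} (uF : Fin m → Fin n → ℝ) (x : Fin m → ℝ) : Set (Fin n) :=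
  {j | ∀ j', pay uF x j' ≤ pay uF x j}

/-- Strong Stackelberg equilibrium of the game (uL, uF). -/
def SSE {m n : ℕ} (uL uF : Fin m → Fin n → ℝ) (x : Fin m → ℝ) (j : Fin n) : Prop :=
  x ∈ simplex m ∧ j ∈ BR uF x ∧
    ∀ x' ∈ simplex m, ∀ j' ∈ BR uF x', pay uL x' j' ≤ pay uL x j

/-- (x, j) is inducible with respect to the leader payoff uL. -/
def Inducible {m n : ℕ} (uL : Fin m → Fin n → ℝ) (x : Fin m → ℝ) (j : Fin n) : Prop :=
  ∃ uF : Fin m → Fin n → ℝ, SSE uL uF x j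

/-- μ is a (maximin-)cover of S w.r.t. uL: max_{x∈𝓜_S} max_{j∈BR(x)} uL(x,j) < M_S. -/
def IsCover {m n : ℕ} (uL μ : Fin m → Fin n → ℝ) (S : Set (Fin n)) : Prop :=
  ∀ x ∈ argMM uL S, ∀ j ∈ BR μ x, pay uL x j < Mval uL S

/-- μ is a proper cover of S w.r.t. uL. -/
def IsProperCover {m n : ℕ} (uL μ : Fin m → Fin n → ℝ) (S : Set (Fin n)) : Prop :=
  IsCover uL μ S ∧ ∀ x ∈ simplex m, ∀ j ∈ S, j ∉ BR μ x


lemma simplex_nonneg {m : ℕ} {x : Fin m → ℝ} (hx : x ∈ simplex m) : ∀ i, 0 ≤ x i := hx.1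

lemma simplex_sum {m : ℕ} {x : Fin m → ℝ} (hx : x ∈ simplex m) : ∑ i, x i = 1 := hx.2

lemma simplex_nonempty {m : ℕ} (hm : 0 < m) : (simplex m).Nonempty := by
  refine ⟨fun _ => (m : ℝ)⁻¹, fun i => by positivity, ?_⟩
  have hm' : (m : ℝ) ≠ 0 := by positivity
  simp [Finset.sum_const, Finset.card_univ, hm']

lemma pay_le_of_le {m n : ℕ} {u : Fin m → Fin n → ℝ} {y : Fin m → ℝ} (hy : y ∈ simplex m)
    {k : Fin n} {C : ℝ} (hC : ∀ i, u i k ≤ C) : pay u y k ≤ C := by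
  have h1 : pay u y k ≤ ∑ i, y i * C :=
    Finset.sum_le_sum fun i _ => mul_le_mul_of_nonneg_left (hC i) (hy.1 i)
  calc pay u y k ≤ ∑ i, y i * C := h1
    _ = (∑ i, y i) * C := by rw [Finset.sum_mul]
    _ = C := by rw [hy.2, one_mul]

lemma minOn_le {m n : ℕ} (u : Fin m → Fin n → ℝ) (y : Fin m → ℝ) (k : Fin n) :
    minOnS u Set.univ y ≤ pay u y k := by
  apply csInf_le
  · rw [Set.image_univ]
    exact (Set.finite_range _).bddBelow
  · exact ⟨k, trivial, rfl⟩

lemma minOn_mem {m n : ℕ} (hn : 0 < n) (u : Fin m → Fin n → ℝ) (y : Fin m → ℝ) :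
    ∃ k, minOnS u Set.univ y = pay u y k := by
  have hne : ((fun j => pay u y j) '' Set.univ).Nonempty := ⟨_, ⟨⟨0, hn⟩, trivial, rfl⟩⟩
  have hfin : ((fun j => pay u y j) '' Set.univ).Finite := (Set.finite_univ).image _
  obtain ⟨k, -, hk⟩ := hne.csInf_mem hfin
  exact ⟨k, hk.symm⟩

lemma bddAbove_minOn_image {m n : ℕ} (hn : 0 < n) (u : Fin m → Fin n → ℝ) :
    BddAbove (minOnS u Set.univ '' simplex m) := by
  set k₀ : Fin n := ⟨0, hn⟩
  refine ⟨∑ i, |u i k₀|, ?_⟩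
  rintro - ⟨y, hy, rfl⟩
  calc minOnS u Set.univ y ≤ pay u y k₀ := minOn_le u y k₀
    _ ≤ ∑ i, |u i k₀| := pay_le_of_le hy fun i =>
        (le_abs_self _).trans (Finset.single_le_sum (fun j _ => abs_nonneg (u j k₀)) (mem_univ i))

lemma minOn_le_Mval {m n : ℕ} (hn : 0 < n) (u : Fin m → Fin n → ℝ) {y : Fin m → ℝ}
    (hy : y ∈ simplex m) : minOnS u Set.univ y ≤ Mval u Set.univ :=
  le_csSup (bddAbove_minOn_image hn u) ⟨y, hy, rfl⟩

lemma exists_cert {m n : ℕ} (hm : 0 < m) (hn : 0 < n) (u : Fin m → Fin n → ℝ) :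
    ∃ lam : Fin n → ℝ, (∀ k, 0 ≤ lam k) ∧ (∑ k, lam k = 1) ∧
      ∀ y ∈ simplex m, (∑ k, lam k * pay u y k) ≤ Mval u Set.univ := by
  set M := Mval u Set.univ with hM
  by_contra hcon
  push_neg at hcon
  -- linear map sending a follower mixture to the leader's vector of expected payoffs by action
  set φ : (Fin n → ℝ) →ₗ[ℝ] (Fin m → ℝ) :=
    { toFun := fun lam i => ∑ k, lam k * u i k
      map_add' := by
        intro a b; funext i
        simp [add_mul, Finset.sum_add_distrib]
      map_smul' := by
        intro c a; funext i
        simp [Finset.mul_sum, mul_assoc] } with hphi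
  set K : Set (Fin m → ℝ) := φ '' stdSimplex ℝ (Fin n) with hK
  set D : Set (Fin m → ℝ) := {w | ∀ i, w i ≤ M} with hD
  have hdisj : Disjoint K D := by
    rw [Set.disjoint_left]
    rintro w ⟨lam, hlam, rfl⟩ hwD
    obtain ⟨y, hy, hvio⟩ := hcon lam hlam.1 hlam.2
    have hswap : (∑ k, lam k * pay u y k) = ∑ i, y i * (φ lam) i := by
      simp only [pay, hphi, LinearMap.coe_mk, AddHom.coe_mk]
      calc ∑ k, lam k * ∑ i, y i * u i k = ∑ k, ∑ i, lam k * (y i * u i k) := by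
            simp [Finset.mul_sum]
        _ = ∑ i, ∑ k, lam k * (y i * u i k) := Finset.sum_comm
        _ = ∑ i, y i * ∑ k, lam k * u i k := by
            refine Finset.sum_congr rfl fun i _ => ?_
            rw [Finset.mul_sum]
            exact Finset.sum_congr rfl fun k _ => by ring
    have hle : (∑ k, lam k * pay u y k) ≤ M := by
      rw [hswap]
      calc ∑ i, y i * (φ lam) i ≤ ∑ i, y i * M :=
            Finset.sum_le_sum fun i _ => mul_le_mul_of_nonneg_left (hwD i) (hy.1 i)
        _ = (∑ i, y i) * M := by rw [Finset.sum_mul]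
        _ = M := by rw [hy.2, one_mul]
    exact absurd hle (not_le.2 hvio)
  have hKcv : Convex ℝ K := (convex_stdSimplex ℝ _).linear_image φ
  have hKcp : IsCompact K := (isCompact_stdSimplex ℝ _).image φ.continuous_of_finiteDimensional
  have hDcv : Convex ℝ D := by
    intro w1 h1 w2 h2 a b ha hb hab
    intro i
    have : (a • w1 + b • w2) i = a * w1 i + b * w2 i := rfl
    rw [this]
    calc a * w1 i + b * w2 i ≤ a * M + b * M :=
          add_le_add (mul_le_mul_of_nonneg_left (h1 i) ha) (mul_le_mul_of_nonneg_left (h2 i) hb)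
      _ = M := by rw [← add_mul, hab, one_mul]
  have hDcl : IsClosed D := by
    have : D = ⋂ i, {w : Fin m → ℝ | w i ≤ M} := by
      ext w; simp [hD, Set.mem_iInter]
    rw [this]
    exact isClosed_iInter fun i => isClosed_le (continuous_apply i) continuous_const
  obtain ⟨f, s, t, hfK, hst, hfD⟩ :=
    geometric_hahn_banach_compact_closed hKcv hKcp hDcv hDcl hdisj
  set e : Fin m → (Fin m → ℝ) := fun i j => if i = j then 1 else 0 with he
  have hrep : ∀ w : Fin m → ℝ, f w = ∑ i, w i * f (e i) := by
    intro w
    conv_lhs => rw [pi_eq_sum_univ w]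
    rw [map_sum]
    exact Finset.sum_congr rfl fun i _ => by rw [map_smul, smul_eq_mul]
  have hfe_nonpos : ∀ i, f (e i) ≤ 0 := by
    intro i; by_contra hpos; push_neg at hpos
    have hmem : ∀ r : ℝ, 0 ≤ r → (((fun _ => M) - r • e i : Fin m → ℝ)) ∈ D := by
      intro r hr i'
      have hv : (((fun _ => M) - r • e i : Fin m → ℝ)) i' = M - r * (if i = i' then 1 else 0) := rfl
      rw [hv]; split_ifs <;> nlinarith
    set t0 : ℝ := max 0 ((f (fun _ => M) - t) / f (e i) + 1) with ht0
    have ht0n : (0:ℝ) ≤ t0 := le_max_left _ _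
    have h1 := hfD _ (hmem t0 ht0n)
    have h2 : f (((fun _ => M) - t0 • e i : Fin m → ℝ)) = f (fun _ => M) - t0 * f (e i) := by
      rw [map_sub, map_smul, smul_eq_mul]
    have h3 : (f (fun _ => M) - t) / f (e i) + 1 ≤ t0 := le_max_right _ _
    have h4 : f (fun _ => M) - t0 * f (e i) < t := by
      have h5 := mul_le_mul_of_nonneg_right h3 (le_of_lt hpos)
      rw [add_mul, one_mul, div_mul_cancel₀ _ (ne_of_gt hpos)] at h5
      nlinarith
    rw [h2] at h1; linarith
  set c : Fin m → ℝ := fun i => -(f (e i)) with hc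
  have hcnn : ∀ i, 0 ≤ c i := fun i => neg_nonneg.2 (hfe_nonpos i)
  have hfe_eq : ∀ i, f (e i) = -(c i) := by intro i; simp [hc]
  have hKne : K.Nonempty := by
    refine ⟨φ (fun k => if k = ⟨0, hn⟩ then 1 else 0), ⟨_, ⟨?_, ?_⟩, rfl⟩⟩
    · intro k
      by_cases h : k = ⟨0, hn⟩ <;> simp [h]
    · simp
  have hDM : (fun _ => M) ∈ D := fun i => le_refl M
  have hcsum : 0 < ∑ i, c i := by
    rcases (Finset.sum_nonneg (fun i (_ : i ∈ univ) => hcnn i)).lt_or_eq with h | h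
    · exact h
    · exfalso
      have hall : ∀ i, c i = 0 := by
        intro i
        exact (Finset.sum_eq_zero_iff_of_nonneg (fun i _ => hcnn i)).1 h.symm i (mem_univ i)
      have hf0 : ∀ w, f w = 0 := by
        intro w; rw [hrep w]
        apply Finset.sum_eq_zero; intro i _
        rw [hfe_eq i, hall i, neg_zero, mul_zero]
      obtain ⟨a, ha⟩ := hKne
      have h1 := hfK a ha
      have h2 := hfD _ hDM
      rw [hf0] at h1 h2
      linarith
  set Sc : ℝ := ∑ i, c i with hSc
  set ys : Fin m → ℝ := fun i => c i / Sc with hys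
  have hysS : ys ∈ simplex m := by
    refine ⟨fun i => div_nonneg (hcnn i) (le_of_lt hcsum), ?_⟩
    rw [show (∑ i, ys i) = (∑ i, c i) / Sc by rw [← Finset.sum_div]]
    rw [← hSc, div_self (ne_of_gt hcsum)]
  have hpay_gt : ∀ k, M < pay u ys k := by
    intro k
    have hδ : (fun k' => if k' = k then (1:ℝ) else 0) ∈ stdSimplex ℝ (Fin n) := by
      refine ⟨fun k' => ?_, by simp⟩
      by_cases h : k' = k <;> simp [h]
    have hφδ : φ (fun k' => if k' = k then (1:ℝ) else 0) = fun i => u i k := by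
      funext i
      simp [hphi, ite_mul]
    have h1 := hfK _ ⟨_, hδ, rfl⟩
    rw [hφδ] at h1
    have h2 := hfD _ hDM
    have h3 : f (fun i => u i k) = -∑ i, c i * u i k := by
      rw [hrep]
      calc ∑ i, u i k * f (e i) = ∑ i, (-1) * (c i * u i k) := by
            exact Finset.sum_congr rfl fun i _ => by rw [hfe_eq i]; ring
        _ = (-1) * ∑ i, c i * u i k := by rw [← Finset.mul_sum]
        _ = -∑ i, c i * u i k := by ring
    have h4 : f (fun _ => M) = -(M * Sc) := by
      rw [hrep]
      calc ∑ i, (fun _ => M) i * f (e i) = ∑ i, (-M) * c i := by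
            exact Finset.sum_congr rfl fun i _ => by rw [hfe_eq i]; ring
        _ = (-M) * Sc := by rw [← Finset.mul_sum, hSc]
        _ = -(M * Sc) := by ring
    rw [h3] at h1; rw [h4] at h2
    have h5 : M * Sc < ∑ i, c i * u i k := by linarith
    have h6 : pay u ys k = (∑ i, c i * u i k) / Sc := by
      rw [pay, Finset.sum_div]
      exact Finset.sum_congr rfl fun i _ => by rw [hys]; ring
    rw [h6, lt_div_iff₀ hcsum]
    linarith
  obtain ⟨k0, hk0⟩ := minOn_mem hn u ys
  have hle := minOn_le_Mval hn u hysS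
  rw [hk0] at hle
  exact absurd hle (not_le.2 (hpay_gt k0))

lemma inducible_of_ge {m n : ℕ} (hm : 0 < m) (hn : 0 < n) (u : Fin m → Fin n → ℝ)
    (x : Fin m → ℝ) (hx : x ∈ simplex m) (j : Fin n) (hge : Mval u Set.univ ≤ pay u x j) :
    Inducible u x j := by
  obtain ⟨lam, hl0, hl1, hcertM⟩ := exists_cert hm hn u
  set v : ℝ := pay u x j with hv
  have hcert : ∀ y ∈ simplex m, (∑ k, lam k * pay u y k) ≤ v :=
    fun y hy => (hcertM y hy).trans hge
  have hlam_le_one : ∀ k, lam k ≤ 1 := by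
    intro k
    rw [← hl1]
    exact Finset.single_le_sum (fun l _ => hl0 l) (mem_univ k)
  -- rank function: actions that look weakly bad for the leader at x come first
  set rho : Fin n → ℕ := fun k => (if v < pay u x k then n + 1 else 0) + k.val with hrho
  have hrho_inj : ∀ k l : Fin n, rho k = rho l → k = l := by
    intro k l h
    have hk := k.isLt
    have hl := l.isLt
    simp only [hrho] at h
    split_ifs at h <;> exact Fin.val_injective (by omega)
  set G : Finset (Fin n) := univ.filter (fun k => k ≠ j ∧ lam k ≠ 0) with hG
  have hjG : j ∉ G := by simp [hG]
  set Sf : Fin n → Finset (Fin n) := fun k => G.filter (fun l => rho l < rho k) with hSf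
  have hSfG : ∀ k, Sf k ⊆ G := fun k => Finset.filter_subset _ _
  set uF : Fin m → Fin n → ℝ := fun i k =>
    if k = j then v - u i j else if k ∈ G then ∑ l ∈ Sf k, lam l * (u i l - v) else -1 with huF
  have payj : ∀ {y : Fin m → ℝ}, y ∈ simplex m → pay uF y j = v - pay u y j := by
    intro y hy
    simp only [pay, huF, if_pos]
    calc ∑ i, y i * (v - u i j) = ∑ i, (y i * v - y i * u i j) := by
          exact Finset.sum_congr rfl fun i _ => by ring
      _ = (∑ i, y i * v) - ∑ i, y i * u i j := Finset.sum_sub_distrib _ _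
      _ = v - pay u y j := by rw [← Finset.sum_mul, hy.2, one_mul, pay]
  have payG : ∀ {y : Fin m → ℝ}, y ∈ simplex m → ∀ {k}, k ∈ G →
      pay uF y k = ∑ l ∈ Sf k, lam l * (pay u y l - v) := by
    intro y hy k hk
    have hkj : k ≠ j := by
      rintro rfl; exact hjG hk
    simp only [pay, huF, if_neg hkj, if_pos hk]
    calc ∑ i, y i * ∑ l ∈ Sf k, lam l * (u i l - v)
        = ∑ i, ∑ l ∈ Sf k, y i * (lam l * (u i l - v)) := by
          exact Finset.sum_congr rfl fun i _ => by rw [Finset.mul_sum]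
      _ = ∑ l ∈ Sf k, ∑ i, y i * (lam l * (u i l - v)) := Finset.sum_comm
      _ = ∑ l ∈ Sf k, lam l * (pay u y l - v) := by
          refine Finset.sum_congr rfl fun l _ => ?_
          calc ∑ i, y i * (lam l * (u i l - v))
              = ∑ i, (lam l * (y i * u i l) - lam l * v * y i) := by
                exact Finset.sum_congr rfl fun i _ => by ring
            _ = lam l * (∑ i, y i * u i l) - lam l * v * ∑ i, y i := by
                rw [Finset.sum_sub_distrib, ← Finset.mul_sum, ← Finset.mul_sum]
            _ = lam l * (pay u y l - v) := by rw [hy.2, pay]; ring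
  have payOut : ∀ {y : Fin m → ℝ}, y ∈ simplex m → ∀ {k}, k ≠ j → k ∉ G → pay uF y k = -1 := by
    intro y hy k h1 h2
    simp only [pay, huF, if_neg h1, if_neg h2]
    calc ∑ i, y i * (-1) = -∑ i, y i := by
          rw [← Finset.sum_neg_distrib]
          exact Finset.sum_congr rfl fun i _ => by ring
      _ = -1 := by rw [hy.2]
  have hGsub : G ⊆ univ.erase j := by
    intro l hl
    rw [Finset.mem_erase]
    exact ⟨(Finset.mem_filter.1 hl).2.1, mem_univ l⟩
  have hTot : ∀ {y : Fin m → ℝ}, y ∈ simplex m →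
      (∑ l ∈ G, lam l * (pay u y l - v)) ≤ -(lam j * (pay u y j - v)) := by
    intro y hy
    have h1 : ∑ l, lam l * (pay u y l - v) = (∑ l, lam l * pay u y l) - v := by
      calc ∑ l, lam l * (pay u y l - v) = ∑ l, (lam l * pay u y l - lam l * v) := by
            exact Finset.sum_congr rfl fun l _ => by ring
        _ = (∑ l, lam l * pay u y l) - ∑ l, lam l * v := Finset.sum_sub_distrib _ _
        _ = (∑ l, lam l * pay u y l) - v := by rw [← Finset.sum_mul, hl1, one_mul]
    have h2 : ∑ l, lam l * (pay u y l - v) ≤ 0 := by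
      rw [h1]
      have := hcert y hy
      linarith
    have h3 : ∑ l ∈ univ.erase j, lam l * (pay u y l - v)
        = ∑ l ∈ G, lam l * (pay u y l - v) := by
      refine (Finset.sum_subset hGsub ?_).symm
      intro l hl hlG
      have hlj : l ≠ j := (Finset.mem_erase.1 hl).1
      have : lam l = 0 := by
        by_contra hne
        exact hlG (Finset.mem_filter.2 ⟨mem_univ l, hlj, hne⟩)
      rw [this, zero_mul]
    have h4 : (∑ l ∈ univ.erase j, lam l * (pay u y l - v)) + lam j * (pay u y j - v)
        = ∑ l, lam l * (pay u y l - v) := Finset.sum_erase_add _ _ (mem_univ j)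
    linarith [h2, h3.symm.trans_le (le_of_eq rfl)]
  have payjx : pay uF x j = 0 := by rw [payj hx, hv]; ring
  -- at x, the uF-payoff of every column is ≤ 0
  have hxcond : ∀ k, pay uF x k ≤ 0 := by
    intro k
    rcases eq_or_ne k j with rfl | hkj
    · rw [payjx]
    by_cases hkG : k ∈ G
    · rw [payG hx hkG]
      by_cases hkpos : v < pay u x k
      · -- positive class: bound by the full G-sum
        have hsub : ∀ l ∈ G, l ∉ Sf k → 0 ≤ lam l * (pay u x l - v) := by
          intro l hlG hlS
          have hrhole : rho k ≤ rho l := by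
            by_contra hlt
            exact hlS (Finset.mem_filter.2 ⟨hlG, by omega⟩)
          have hlpos : v < pay u x l := by
            by_contra hnp
            have h1 : rho l = l.val := by simp [hrho, hnp]
            have h2 : rho k = n + 1 + k.val := by simp [hrho, hkpos]
            have := l.isLt
            omega
          exact mul_nonneg (hl0 l) (by linarith)
        have hle1 : (∑ l ∈ Sf k, lam l * (pay u x l - v)) ≤
            ∑ l ∈ G, lam l * (pay u x l - v) :=
          Finset.sum_le_sum_of_subset_of_nonneg (hSfG k) hsub
        have hle2 := hTot hx
        rw [← hv] at hle2
        have : -(lam j * (pay u x j - v)) = 0 := by rw [hv]; ring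
        linarith [hle1, hle2]
      · -- nonpositive class: every summand is nonpositive
        apply Finset.sum_nonpos
        intro l hlS
        have hlG : l ∈ G := hSfG k hlS
        have hlt : rho l < rho k := (Finset.mem_filter.1 hlS).2
        have hlnp : ¬ v < pay u x l := by
          intro hlp
          have h1 : rho l = n + 1 + l.val := by simp [hrho, hlp]
          have h2 : rho k = k.val := by simp [hrho, hkpos]
          have := k.isLt
          omega
        exact mul_nonpos_of_nonneg_of_nonpos (hl0 l) (by push_neg at hlnp; linarith)
    · rw [payOut hx hkj hkG]; norm_num
  refine ⟨uF, hx, ?_, ?_⟩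
  · -- j ∈ BR uF x
    intro k
    rw [payjx]
    exact hxcond k
  · -- safety of every best response everywhere
    intro y hy k hk
    rw [← hv]
    by_cases hGne : G.Nonempty
    · obtain ⟨g0, hg0G, hg0min⟩ := Finset.exists_min_image G rho hGne
      have payg0 : pay uF y g0 = 0 := by
        rw [payG hy hg0G]
        have hempty : Sf g0 = ∅ := by
          rw [hSf, Finset.filter_eq_empty_iff]
          intro l hl
          exact not_lt.2 (hg0min l hl)
        rw [hempty, Finset.sum_empty]
      rcases eq_or_ne k j with rfl | hkj
      · have h1 := hk g0
        rw [payg0, payj hy] at h1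
        linarith
      by_cases hkG : k ∈ G
      · have hlamk : 0 < lam k :=
          lt_of_le_of_ne (hl0 k) (Ne.symm (Finset.mem_filter.1 hkG).2.2)
        by_cases hA : (G.filter (fun l => rho k < rho l)).Nonempty
        · obtain ⟨k', hk'A, hk'min⟩ := Finset.exists_min_image _ rho hA
          have hk'G : k' ∈ G := (Finset.mem_filter.1 hk'A).1
          have hkk' : rho k < rho k' := (Finset.mem_filter.1 hk'A).2
          have hS : Sf k' = insert k (Sf k) := by
            ext l
            simp only [hSf, Finset.mem_filter, Finset.mem_insert]
            constructor
            · rintro ⟨hlG, hl⟩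
              rcases lt_trichotomy (rho l) (rho k) with h | h | h
              · exact Or.inr ⟨hlG, h⟩
              · exact Or.inl (hrho_inj l k h)
              · exact absurd (hk'min l (Finset.mem_filter.2 ⟨hlG, h⟩)) (not_le.2 hl)
            · rintro (rfl | ⟨hlG, h⟩)
              · exact ⟨hkG, hkk'⟩
              · exact ⟨hlG, h.trans hkk'⟩
          have hknotS : k ∉ Sf k := by
            simp [hSf]
          have hcomp := hk k'
          rw [payG hy hk'G, hS, Finset.sum_insert hknotS, payG hy hkG] at hcomp
          by_contra hgt
          push_neg at hgt
          linarith [mul_pos hlamk (by linarith : (0:ℝ) < pay u y k - v)]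
        · -- k is the rho-maximal element of G
          have hSk : Sf k = G.erase k := by
            ext l
            simp only [hSf, Finset.mem_filter, Finset.mem_erase]
            constructor
            · rintro ⟨hlG, hl⟩
              refine ⟨fun he => ?_, hlG⟩
              subst he; exact lt_irrefl _ hl
            · rintro ⟨hne, hlG⟩
              refine ⟨hlG, ?_⟩
              have h1 : ¬ rho k < rho l := by
                intro hlt
                rw [Finset.not_nonempty_iff_eq_empty, Finset.filter_eq_empty_iff] at hA
                exact hA hlG hlt
              have h2 : rho l ≠ rho k := fun h => hne (hrho_inj l k h)
              omega
          have hsum : lam k * (pay u y k - v) + pay uF y k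
              = ∑ l ∈ G, lam l * (pay u y l - v) := by
            rw [payG hy hkG, hSk]
            exact Finset.add_sum_erase G (fun l => lam l * (pay u y l - v)) hkG
          have hG_le := hTot hy
          have hnp : lam k * (pay u y k - v) ≤ 0 := by
            rcases le_or_gt (pay u y j) v with hEj | hEj
            · have hcomp := hk j
              rw [payj hy] at hcomp
              have haux : 0 ≤ (1 - lam j) * (v - pay u y j) :=
                mul_nonneg (by linarith [hlam_le_one j]) (by linarith)
              have e2 : lam k * (pay u y k - v)
                  ≤ -(lam j * (pay u y j - v)) + (pay u y j - v) := by
                linarith [hsum, hG_le, hcomp]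
              have e3 : -(lam j * (pay u y j - v)) + (pay u y j - v)
                  = -((1 - lam j) * (v - pay u y j)) := by ring
              rw [e3] at e2
              linarith
            · have hcomp := hk g0
              rw [payg0] at hcomp
              have haux : 0 ≤ lam j * (pay u y j - v) :=
                mul_nonneg (hl0 j) (by linarith)
              linarith [hsum, hG_le, hcomp]
          by_contra hgt
          push_neg at hgt
          linarith [mul_pos hlamk (by linarith : (0:ℝ) < pay u y k - v)]
      · exfalso
        have hcomp := hk g0
        rw [payg0, payOut hy hkj hkG] at hcomp
        linarith
    · -- G is empty: lam is the point mass on j and column j is globally safe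
      have hlam0 : ∀ l, l ≠ j → lam l = 0 := by
        intro l hl
        by_contra h
        exact hGne ⟨l, Finset.mem_filter.2 ⟨mem_univ l, hl, h⟩⟩
      have hEj : ∀ y' ∈ simplex m, pay u y' j ≤ v := by
        intro y' hy'
        have h1 := hcert y' hy'
        have h2 : ∑ l, lam l * pay u y' l = lam j * pay u y' j :=
          Finset.sum_eq_single j (fun l _ hl => by rw [hlam0 l hl, zero_mul])
            (fun h => absurd (mem_univ j) h)
        have hlamj : lam j = 1 := by
          rw [← hl1]
          exact (Finset.sum_eq_single j (fun l _ hl => hlam0 l hl)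
            (fun h => absurd (mem_univ j) h)).symm
        rw [h2, hlamj, one_mul] at h1
        exact h1
      rcases eq_or_ne k j with rfl | hkj
      · exact hEj y hy
      · exfalso
        by_cases hkG : k ∈ G
        · exact hGne ⟨k, hkG⟩
        have hcomp := hk j
        rw [payj hy, payOut hy hkj hkG] at hcomp
        have := hEj y hy
        linarith


lemma ge_of_inducible {m n : ℕ} (hm : 0 < m) (hn : 0 < n) (u : Fin m → Fin n → ℝ)
    (x : Fin m → ℝ) (hx : x ∈ simplex m) (j : Fin n) (h : Inducible u x j) :
    Mval u Set.univ ≤ pay u x j := by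
  obtain ⟨uF, hxS, hjBR, hdom⟩ := h
  obtain ⟨y0, hy0⟩ := simplex_nonempty hm
  refine csSup_le ⟨minOnS u Set.univ y0, y0, hy0, rfl⟩ ?_
  rintro b ⟨y, hy, rfl⟩
  obtain ⟨ks, -, hks⟩ := Finset.exists_max_image (univ : Finset (Fin n)) (pay uF y)
    ⟨⟨0, hn⟩, mem_univ _⟩
  have hBR : ks ∈ BR uF y := fun j' => hks j' (mem_univ j')
  calc minOnS u Set.univ y ≤ pay u y ks := minOn_le u y ks
    _ ≤ pay u x j := hdom y hy ks hBR

/-- Birmpas et al. characterization: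
(x,j) is inducible w.r.t. u^L iff u^L(x,j) ≥ M_{[n]}. -/
theorem inducible_iff_ge_maximin {m n : ℕ} (hm : 0 < m) (hn : 0 < n)
    (uL : Fin m → Fin n → ℝ) (x : Fin m → ℝ) (hx : x ∈ simplex m) (j : Fin n) :
    Inducible uL x j ↔ Mval uL Set.univ ≤ pay uL x j :=
  ⟨ge_of_inducible hm hn uL x hx j, inducible_of_ge hm hn uL x hx j⟩
end
end

section
/- For any nonempty subset S ⊆ [n] of the follower's actions, if there exists a cover of S with respect to u^L, then there exists a proper cover of S with respect to u^L. -/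
open scoped Classical
open Finset

noncomputable section

section Aux

variable {m n : ℕ}

lemma pay_continuous (u : Fin m → Fin n → ℝ) (j : Fin n) :
    Continuous fun x : Fin m → ℝ => pay u x j := by
  unfold pay
  exact continuous_finset_sum _ fun i _ =>
    (continuous_apply i).mul continuous_const

lemma minOn_continuous (u : Fin m → Fin n → ℝ) {S : Set (Fin n)} (hS : S.Nonempty) :
    Continuous (minOnS u S) := by
  have hne : S.toFinset.Nonempty := Set.toFinset_nonempty.2 hS
  have : minOnS u S = fun x => S.toFinset.inf' hne (fun j => pay u x j) := by
    funext x
    rw [Finset.inf'_eq_csInf_image]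
    simp [minOnS, Set.coe_toFinset]
  rw [this]
  exact Continuous.finset_inf'_apply hne fun j _ => pay_continuous u j

lemma minOn_le_pay (u : Fin m → Fin n → ℝ) {S : Set (Fin n)} {j : Fin n} (hj : j ∈ S)
    (x : Fin m → ℝ) : minOnS u S x ≤ pay u x j := by
  apply csInf_le
  · exact (S.toFinite.image _).bddBelow
  · exact ⟨j, hj, rfl⟩

lemma abs_pay_le (u : Fin m → Fin n → ℝ) {x : Fin m → ℝ} (hx : x ∈ simplex m) (j : Fin n) :
    |pay u x j| ≤ ∑ i, ∑ j', |u i j'| := by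
  obtain ⟨hx0, hx1⟩ := hx
  calc |pay u x j| ≤ ∑ i, |x i * u i j| := Finset.abs_sum_le_sum_abs _ _
    _ ≤ ∑ i, ∑ j', |u i j'| := by
        apply Finset.sum_le_sum
        intro i _
        rw [abs_mul, abs_of_nonneg (hx0 i)]
        have hxi : x i ≤ 1 := by
          rw [← hx1]
          exact Finset.single_le_sum (fun k _ => hx0 k) (Finset.mem_univ i)
        calc x i * |u i j| ≤ 1 * |u i j| := by
              apply mul_le_mul_of_nonneg_right hxi (abs_nonneg _)
          _ = |u i j| := one_mul _
          _ ≤ ∑ j', |u i j'| :=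
              Finset.single_le_sum (f := fun j' => |u i j'|) (fun k _ => abs_nonneg _)
                (Finset.mem_univ j)

end Aux

/-- if a cover of S exists, then a proper cover of S exists. -/
theorem exists_properCover_of_exists_cover {m n : ℕ} (hm : 0 < m) (hn : 0 < n)
    (uL : Fin m → Fin n → ℝ) (S : Set (Fin n)) (hS : S.Nonempty)
    (μ : Fin m → Fin n → ℝ) (hμ : IsCover uL μ S) :
    ∃ μ' : Fin m → Fin n → ℝ, IsProperCover uL μ' S := by
  classical
  set B : ℝ := ∑ i, ∑ j', |uL i j'| with hB
  -- the modified follower payoff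
  set μ' : Fin m → Fin n → ℝ :=
    fun i j => -uL i j + (if j ∈ S then 0 else 2 * B + 1) with hμ'def
  have paypos : ∀ x ∈ simplex m, ∀ j,
      pay μ' x j = -pay uL x j + (if j ∈ S then 0 else 2 * B + 1) := by
    intro x hx j
    have hx1 : ∑ i, x i = 1 := hx.2
    simp only [hμ'def, pay, mul_add, Finset.sum_add_distrib, mul_neg, ← Finset.sum_neg_distrib,
      ← Finset.sum_mul, hx1, one_mul]
  -- key comparison: an action in S is always strictly worse than one outside S
  have hcmp : ∀ x ∈ simplex m, ∀ j ∈ S, ∀ j', j' ∉ S → pay μ' x j < pay μ' x j' := by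
    intro x hx j hj j' hj'
    rw [paypos x hx j, paypos x hx j', if_pos hj, if_neg hj']
    have h1 : |pay uL x j| ≤ B := abs_pay_le uL hx j
    have h2 : |pay uL x j'| ≤ B := abs_pay_le uL hx j'
    have := abs_le.1 h1
    have := abs_le.1 h2
    linarith [abs_le.1 h1, abs_le.1 h2]
  -- for any x ∈ argMM, there is a best response to μ lying outside S with low payoff
  have hBRx : ∀ x ∈ argMM uL S, ∃ j₀, j₀ ∉ S ∧ pay uL x j₀ < Mval uL S := by
    intro x hx
    have : Nonempty (Fin n) := ⟨⟨0, hn⟩⟩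
    obtain ⟨j₀, hj₀⟩ := Finite.exists_max (pay μ x)
    have hj₀BR : j₀ ∈ BR μ x := hj₀
    have hlt : pay uL x j₀ < Mval uL S := hμ x hx j₀ hj₀BR
    refine ⟨j₀, ?_, hlt⟩
    intro hmem
    have h1 : minOnS uL S x ≤ pay uL x j₀ := minOn_le_pay uL hmem x
    have h2 : minOnS uL S x = Mval uL S := hx.2
    linarith
  -- argMM is nonempty (compactness)
  have hx₀simp : (fun i => if (⟨0, hm⟩ : Fin m) = i then (1:ℝ) else 0) ∈ simplex m :=
    ite_eq_mem_stdSimplex ℝ _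
  obtain ⟨x₀, hx₀mem, hx₀eq⟩ :=
    (isCompact_stdSimplex ℝ (Fin m)).exists_sSup_image_eq ⟨_, hx₀simp⟩
      (minOn_continuous uL hS).continuousOn
  have hx₀argMM : x₀ ∈ argMM uL S := ⟨hx₀mem, hx₀eq.symm⟩
  obtain ⟨jout, hjout, _⟩ := hBRx x₀ hx₀argMM
  refine ⟨μ', ?_, ?_⟩
  · -- cover
    intro x hx j hj
    obtain ⟨j₀, hj₀S, hj₀lt⟩ := hBRx x hx
    have hxsimp : x ∈ simplex m := hx.1
    have hjS : j ∉ S := by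
      intro hjS
      exact absurd (hj j₀) (not_le.2 (hcmp x hxsimp j hjS j₀ hj₀S))
    have hle : pay μ' x j₀ ≤ pay μ' x j := hj j₀
    rw [paypos x hxsimp j, paypos x hxsimp j₀, if_neg hjS, if_neg hj₀S] at hle
    linarith
  · -- properness
    intro x hx j hj hjBR
    exact absurd (hjBR jout) (not_le.2 (hcmp x hx j hj jout hjout))
end
end

section
/- Suppose J ⊆ [n] and x* ∈ Δ_m satisfy u^L(x*,j) = M_J = M_{[n]} for all j ∈ J; suppose for every j ∈ [n] a vector ã_j ∈ ℝ^m is given such that either there exist γ_j > 0 and β_j ∈ ℝ with u^L(x,j) = γ_j·(ã_j·x) + β_j for all x ∈ Δ_m, or M_{{j}} = M_{[n]} and ã_j is the 0/1 indicator vector of I_j = argmax_{i∈[m]} u^L(i,j). Let k ∈ [n], y ∈ Δ_m, and define ũ^L(x,j) = ã_j·x − ã_j·x* for j ∈ J\{k}, ũ^L(x,k) = ã_k·x − ã_k·y, and ũ^L(x,j) = 1 for j ∉ J∪{k}. If u^L(y,k) ≥ M_{[n]}, then max_{x∈Δ_m} min_{j∈[n]} ũ^L(x,j) ≤ 0 =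 ũ^L(y,k); consequently (y,k) is inducible with respect to ũ^L. -/
open scoped Classical
open Finset

noncomputable section

/-- The surrogate leader payoff ũ^L built from a, J, k, x*, y
(as a matrix; its linear extension to Δ_m gives exactly the formula in the paper). -/
def tuLdef {m n : ℕ} (a : Fin n → Fin m → ℝ) (J : Set (Fin n)) (k : Fin n)
    (xstar y : Fin m → ℝ) : Fin m → Fin n → ℝ :=
  fun i j =>
    if j = k then a k i - dot (a k) y
    else if j ∈ J then a j i - dot (a j) xstar
    else 1

namespace SurrAux

variable {m n : ℕ}

lemma fin_nonempty {x : Fin m → ℝ} (hx : x ∈ simplex m) : Nonempty (Fin m) := by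
  by_contra h
  rw [not_nonempty_iff] at h
  have h1 := hx.2
  rw [Finset.univ_eq_empty, Finset.sum_empty] at h1
  norm_num at h1

lemma pay_le_sup {u : Fin m → Fin n → ℝ} {x : Fin m → ℝ} (hx : x ∈ simplex m) (j : Fin n)
    (hne : (Finset.univ : Finset (Fin m)).Nonempty) :
    pay u x j ≤ Finset.univ.sup' hne (fun i => u i j) := by
  have h1 : pay u x j ≤ ∑ i, x i * Finset.univ.sup' hne (fun i => u i j) := by
    apply Finset.sum_le_sum
    intro i _
    exact mul_le_mul_of_nonneg_left (Finset.le_sup' (f := fun i' => u i' j) (Finset.mem_univ i)) (hx.1 i)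
  calc pay u x j ≤ ∑ i, x i * Finset.univ.sup' hne (fun i => u i j) := h1
    _ = (∑ i, x i) * Finset.univ.sup' hne (fun i => u i j) := by rw [Finset.sum_mul]
    _ = Finset.univ.sup' hne (fun i => u i j) := by rw [hx.2, one_mul]

lemma minOn_le_pay {u : Fin m → Fin n → ℝ} {S : Set (Fin n)} {x : Fin m → ℝ} {j : Fin n}
    (hj : j ∈ S) : minOnS u S x ≤ pay u x j :=
  csInf_le (Set.Finite.bddBelow (Set.toFinite _)) ⟨j, hj, rfl⟩

lemma le_minOn {u : Fin m → Fin n → ℝ} {S : Set (Fin n)} {x : Fin m → ℝ} {c : ℝ}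
    (hS : S.Nonempty) (h : ∀ j ∈ S, c ≤ pay u x j) : c ≤ minOnS u S x := by
  apply le_csInf (hS.image _)
  rintro b ⟨j, hj, rfl⟩
  exact h j hj

lemma bddAbove_minOn_image {u : Fin m → Fin n → ℝ} {S : Set (Fin n)} (hS : S.Nonempty) :
    BddAbove (minOnS u S '' simplex m) := by
  rcases isEmpty_or_nonempty (Fin m) with hm | hm
  · have : simplex m = ∅ := by
      rw [Set.eq_empty_iff_forall_notMem]
      intro x hx
      exact (not_nonempty_iff.2 hm) (fin_nonempty hx)
    rw [this, Set.image_empty]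
    exact bddAbove_empty
  · obtain ⟨j₀, hj₀⟩ := hS
    have hne : (Finset.univ : Finset (Fin m)).Nonempty := Finset.univ_nonempty
    refine ⟨Finset.univ.sup' hne (fun i => u i j₀), ?_⟩
    rintro b ⟨x, hx, rfl⟩
    exact (minOn_le_pay hj₀).trans (pay_le_sup hx j₀ hne)

lemma minOn_le_Mval {u : Fin m → Fin n → ℝ} {S : Set (Fin n)} (hS : S.Nonempty)
    {x : Fin m → ℝ} (hx : x ∈ simplex m) : minOnS u S x ≤ Mval u S :=
  le_csSup (bddAbove_minOn_image hS) ⟨x, hx, rfl⟩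

lemma Mval_le {u : Fin m → Fin n → ℝ} {S : Set (Fin n)} {c : ℝ}
    (hne : (simplex m).Nonempty) (h : ∀ x ∈ simplex m, minOnS u S x ≤ c) : Mval u S ≤ c :=
  csSup_le (hne.image _) (by rintro b ⟨x, hx, rfl⟩; exact h x hx)

/-- vertex of the simplex -/
def vert {k : ℕ} (i : Fin k) : Fin k → ℝ := fun i' => if i' = i then 1 else 0

lemma vert_mem {k : ℕ} (i : Fin k) : vert i ∈ stdSimplex ℝ (Fin k) := by
  constructor
  · intro i'; unfold vert; split <;> norm_num
  · unfold vert
    rw [Finset.sum_ite_eq' Finset.univ i (fun _ => (1:ℝ)), if_pos (Finset.mem_univ i)]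

lemma vert_mem' (i : Fin m) : vert i ∈ simplex m := vert_mem i

lemma pay_vert (u : Fin m → Fin n → ℝ) (i : Fin m) (j : Fin n) :
    pay u (vert i) j = u i j := by
  unfold pay vert
  have : ∀ i' ∈ Finset.univ, (if i' = i then (1:ℝ) else 0) * u i' j
      = if i' = i then u i' j else 0 := by
    intro i' _; split <;> simp
  rw [Finset.sum_congr rfl this, Finset.sum_ite_eq' Finset.univ i (fun i' => u i' j),
    if_pos (Finset.mem_univ i)]

lemma minOn_singleton (u : Fin m → Fin n → ℝ) (x : Fin m → ℝ) (j : Fin n) :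
    minOnS u {j} x = pay u x j := by
  unfold minOnS
  rw [Set.image_singleton, csInf_singleton]

lemma Mval_singleton {u : Fin m → Fin n → ℝ} (hm : Nonempty (Fin m)) (j : Fin n) :
    Mval u {j} = Finset.univ.sup' Finset.univ_nonempty (fun i => u i j) := by
  have hne : (Finset.univ : Finset (Fin m)).Nonempty := Finset.univ_nonempty
  apply le_antisymm
  · apply Mval_le ⟨vert (Classical.arbitrary _), vert_mem' _⟩
    intro x hx
    rw [minOn_singleton]
    exact pay_le_sup hx j hne
  · obtain ⟨i₀, _, hi₀⟩ := Finset.exists_mem_eq_sup' hne (fun i => u i j)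
    rw [hi₀]
    have h := minOn_le_Mval (u := u) (S := {j}) ⟨j, rfl⟩ (vert_mem' i₀)
    rwa [minOn_singleton, pay_vert] at h

lemma support_subset {u : Fin m → Fin n → ℝ} {x : Fin m → ℝ} (hx : x ∈ simplex m) {j : Fin n}
    (hm : (Finset.univ : Finset (Fin m)).Nonempty)
    (hpay : Finset.univ.sup' hm (fun i => u i j) ≤ pay u x j) :
    ∀ i, x i ≠ 0 → ∀ i', u i' j ≤ u i j := by
  set B := Finset.univ.sup' hm (fun i => u i j) with hB
  have hle : pay u x j ≤ B := pay_le_sup hx j hm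
  have heq : pay u x j = B := le_antisymm hle hpay
  have hsum : ∑ i, x i * (B - u i j) = 0 := by
    have h1 : ∑ i, x i * (B - u i j) = (∑ i, x i) * B - pay u x j := by
      unfold pay
      rw [Finset.sum_mul, ← Finset.sum_sub_distrib]
      exact Finset.sum_congr rfl fun i _ => by ring
    rw [h1, hx.2, one_mul, heq, sub_self]
  have hzero := (Finset.sum_eq_zero_iff_of_nonneg (fun i _ =>
    mul_nonneg (hx.1 i) (sub_nonneg.2 (Finset.le_sup' (f := fun i' => u i' j) (Finset.mem_univ i))))).1 hsum
  intro i hxi i'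
  have h := hzero i (Finset.mem_univ i)
  rcases mul_eq_zero.1 h with h' | h'
  · exact absurd h' hxi
  · have : u i j = B := by linarith
    rw [this]
    exact Finset.le_sup' (f := fun i'' => u i'' j) (Finset.mem_univ i')

lemma dot_indicator_le {x : Fin m → ℝ} (hx : x ∈ simplex m) (P : Fin m → Prop) [∀ i, Decidable (P i)] :
    dot (fun i => if P i then (1:ℝ) else 0) x ≤ 1 := by
  unfold dot
  have h1 : ∑ i, (if P i then (1:ℝ) else 0) * x i ≤ ∑ i, x i := by
    apply Finset.sum_le_sum
    intro i _
    split
    · rw [one_mul]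
    · rw [zero_mul]; exact hx.1 i
  rw [hx.2] at h1
  exact h1

lemma dot_indicator_eq {x : Fin m → ℝ} (hx : x ∈ simplex m) {P : Fin m → Prop} [∀ i, Decidable (P i)]
    (h : ∀ i, x i ≠ 0 → P i) :
    dot (fun i => if P i then (1:ℝ) else 0) x = 1 := by
  unfold dot
  have h1 : ∀ i ∈ Finset.univ, (if P i then (1:ℝ) else 0) * x i = x i := by
    intro i _
    by_cases hxi : x i = 0
    · rw [hxi, mul_zero]
    · rw [if_pos (h i hxi), one_mul]
  rw [Finset.sum_congr rfl h1, hx.2]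


lemma sum_mul_eq_dot (a x : Fin m → ℝ) : ∑ i, x i * a i = dot a x := by
  unfold dot
  exact Finset.sum_congr rfl fun i _ => mul_comm _ _

/-- certificate from the maximin bound -/
lemma exists_cert (u : Fin m → Fin n → ℝ) (hn : Nonempty (Fin n))
    (hms : (simplex m).Nonempty) (hM : Mval u Set.univ ≤ 0) :
    ∃ q : Fin n → ℝ, (∀ j, 0 ≤ q j) ∧ ∑ j, q j = 1 ∧ ∀ i, ∑ j, q j * u i j ≤ 0 := by
  by_contra hcon
  push_neg at hcon
  -- separation setup
  set T : (Fin n → ℝ) → (Fin m → ℝ) := fun q => fun i => ∑ j, q j * u i j with hT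
  set S : Set (Fin m → ℝ) := T '' (stdSimplex ℝ (Fin n)) with hS
  set B : Set (Fin m → ℝ) := {v | ∀ i, v i ≤ 0} with hBdef
  have hTlin : IsLinearMap ℝ T := by
    constructor
    · intro p r
      funext i
      simp only [T, Pi.add_apply]
      rw [← Finset.sum_add_distrib]
      exact Finset.sum_congr rfl fun j _ => by ring
    · intro c p
      funext i
      simp only [T, Pi.smul_apply, smul_eq_mul]
      rw [Finset.mul_sum]
      exact Finset.sum_congr rfl fun j _ => by ring
  have hTcont : Continuous T := by
    apply continuous_pi
    intro i
    apply continuous_finset_sum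
    intro j _
    exact (continuous_apply j).mul continuous_const
  have hScv : Convex ℝ S := (convex_stdSimplex ℝ (Fin n)).is_linear_image hTlin
  have hScp : IsCompact S := (isCompact_stdSimplex ℝ (Fin n)).image hTcont
  have hBcv : Convex ℝ B := by
    intro v hv w hw α β hα hβ hαβ i
    simp only [Pi.add_apply, Pi.smul_apply, smul_eq_mul]
    have := hv i
    have := hw i
    nlinarith
  have hBcl : IsClosed B := by
    have : B = ⋂ i, (fun v : Fin m → ℝ => v i) ⁻¹' (Set.Iic 0) := by
      ext v; simp [hBdef, Set.mem_iInter]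
    rw [this]
    exact isClosed_iInter fun i => IsClosed.preimage (continuous_apply i) isClosed_Iic
  have hdisj : Disjoint S B := by
    rw [Set.disjoint_left]
    rintro v ⟨q, hq, rfl⟩ hvB
    obtain ⟨i, hi⟩ := hcon q hq.1 hq.2
    exact absurd (hvB i) (by simpa [T] using not_le.2 hi)
  obtain ⟨f, c₁, c₂, hfS, hc, hfB⟩ :=
    geometric_hahn_banach_compact_closed hScv hScp hBcv hBcl hdisj
  -- basic facts
  have hc₂ : c₂ < 0 := by
    have h0 : (0 : Fin m → ℝ) ∈ B := fun i => le_refl 0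
    have := hfB 0 h0
    rwa [map_zero] at this
  -- expansion of f
  have hexp : ∀ w : Fin m → ℝ, f w = ∑ i, w i * f (SurrAux.vert i) := by
    intro w
    have hw : w = ∑ i, w i • SurrAux.vert i := by
      funext i'
      rw [Finset.sum_apply]
      simp only [Pi.smul_apply, SurrAux.vert, smul_eq_mul, mul_ite, mul_one, mul_zero]
      rw [Finset.sum_ite_eq Finset.univ i' w, if_pos (Finset.mem_univ i')]
    conv_lhs => rw [hw]
    rw [map_sum]
    exact Finset.sum_congr rfl fun i _ => by rw [map_smul]; rfl
  set φ : Fin m → ℝ := fun i => f (SurrAux.vert i) with hφ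
  have hφle : ∀ i, φ i ≤ 0 := by
    intro i
    by_contra hpos
    push_neg at hpos
    set t : ℝ := (c₂ - 1) / φ i with ht
    have htneg : t < 0 := div_neg_of_neg_of_pos (by linarith) hpos
    set w : Fin m → ℝ := fun i' => if i' = i then t else 0 with hwdef
    have hwB : w ∈ B := by
      intro i'
      simp only [hwdef]
      split
      · linarith
      · exact le_refl 0
    have hfw : f w = t * φ i := by
      rw [hexp w]
      have : ∀ i' ∈ Finset.univ, w i' * φ i' = if i' = i then t * φ i else 0 := by
        intro i' _
        simp only [hwdef]
        split
        · rename_i h; rw [h]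
        · rw [zero_mul]
      rw [Finset.sum_congr rfl this, Finset.sum_ite_eq' Finset.univ i (fun _ => t * φ i),
        if_pos (Finset.mem_univ i)]
    have h2 := hfB w hwB
    rw [hfw, ht, div_mul_cancel₀ _ (ne_of_gt hpos)] at h2
    linarith
  -- columns are in S
  have hcol : ∀ j : Fin n, (fun i => u i j) ∈ S := by
    intro j
    refine ⟨SurrAux.vert j, SurrAux.vert_mem j, ?_⟩
    funext i
    simp only [T, SurrAux.vert]
    have : ∀ j' ∈ Finset.univ, (if j' = j then (1:ℝ) else 0) * u i j'
        = if j' = j then u i j' else 0 := by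
      intro j' _; split <;> simp
    rw [Finset.sum_congr rfl this, Finset.sum_ite_eq' Finset.univ j (fun j' => u i j'),
      if_pos (Finset.mem_univ j)]
  have hfcol : ∀ j, f (fun i => u i j) < 0 := fun j => by
    have := hfS _ (hcol j)
    linarith
  -- normalize
  set Sψ : ℝ := ∑ i, -φ i with hSdef
  have hSpos : 0 < Sψ := by
    rcases lt_or_ge 0 Sψ with h | h
    · exact h
    · exfalso
      have hall : ∀ i ∈ Finset.univ, -φ i = 0 := by
        apply (Finset.sum_eq_zero_iff_of_nonneg (fun i _ => neg_nonneg.2 (hφle i))).1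
        have h0 : (0:ℝ) ≤ Sψ := Finset.sum_nonneg fun i _ => neg_nonneg.2 (hφle i)
        rw [← hSdef]
        linarith
      obtain ⟨j⟩ := hn
      have := hfcol j
      rw [hexp] at this
      have hz : ∀ i ∈ Finset.univ, u i j * φ i = 0 := by
        intro i hi
        have := hall i hi
        have hφ0 : φ i = 0 := by linarith
        rw [hφ0, mul_zero]
      rw [Finset.sum_congr rfl (fun i hi => by rw [hz i hi])] at this
      simp at this
  set xh : Fin m → ℝ := fun i => (-φ i) / Sψ with hxh
  have hxhmem : xh ∈ simplex m := by
    constructor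
    · intro i
      exact div_nonneg (neg_nonneg.2 (hφle i)) (le_of_lt hSpos)
    · simp only [hxh]
      rw [← Finset.sum_div, div_self (ne_of_gt hSpos)]
  have hpaypos : ∀ j, 0 < pay u xh j := by
    intro j
    have h1 : pay u xh j * Sψ = - f (fun i => u i j) := by
      unfold pay
      rw [Finset.sum_mul, hexp (fun i => u i j), ← Finset.sum_neg_distrib]
      have hS0 : Sψ ≠ 0 := ne_of_gt hSpos
      apply Finset.sum_congr rfl
      intro i _
      simp only [hxh]
      field_simp
      simp only [hφ]; ring
    have h2 : 0 < - f (fun i => u i j) := by linarith [hfcol j]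
    nlinarith
  -- contradiction with Mval ≤ 0
  obtain ⟨j₀⟩ := hn
  have hne : ((fun j => pay u xh j) '' Set.univ).Nonempty :=
    ⟨pay u xh j₀, j₀, Set.mem_univ _, rfl⟩
  have hmem := Set.Nonempty.csInf_mem hne (Set.toFinite _)
  obtain ⟨j₂, _, hj₂⟩ := hmem
  have hminpos : 0 < minOnS u Set.univ xh := by
    unfold minOnS
    rw [← hj₂]
    exact hpaypos j₂
  have := minOn_le_Mval (u := u) (S := Set.univ) ⟨j₀, Set.mem_univ _⟩ hxhmem
  linarith


/-- the main construction: a certificate plus pay v y k = 0 gives inducibility -/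
lemma inducible_of_cert (v : Fin m → Fin n → ℝ) (y : Fin m → ℝ) (k : Fin n)
    (hy : y ∈ simplex m) (hyk0 : pay v y k = 0)
    (q : Fin n → ℝ) (hq0 : ∀ j, 0 ≤ q j) (hq1 : ∑ j, q j = 1)
    (hqi : ∀ i, ∑ j, q j * v i j ≤ 0) :
    Inducible v y k := by
  classical
  -- certificate in pay form
  have hcert : ∀ x ∈ simplex m, ∑ j, q j * pay v x j ≤ 0 := by
    intro x hx
    have h1 : ∑ j, q j * pay v x j = ∑ i, x i * (∑ j, q j * v i j) := by
      unfold pay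
      have hL : ∀ j ∈ Finset.univ, q j * ∑ i, x i * v i j = ∑ i, x i * (q j * v i j) := by
        intro j _
        rw [Finset.mul_sum]
        exact Finset.sum_congr rfl fun i _ => by ring
      rw [Finset.sum_congr rfl hL, Finset.sum_comm]
      apply Finset.sum_congr rfl
      intro i _
      rw [Finset.mul_sum]
    rw [h1]
    apply Finset.sum_nonpos
    intro i _
    exact mul_nonpos_of_nonneg_of_nonpos (hx.1 i) (hqi i)
  -- existence of a positive weight
  have hsupp : ∃ j, 0 < q j := by
    by_contra hc
    push_neg at hc
    have : ∑ j, q j = 0 := Finset.sum_eq_zero fun j _ => le_antisymm (hc j) (hq0 j)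
    rw [hq1] at this
    norm_num at this
  by_cases hA : ∃ jh, jh ≠ k ∧ 0 < q jh ∧ pay v y jh < 0
  · -- main case: boosted attractive supported column
    obtain ⟨jh, hjhk, hqjh, hatt⟩ := hA
    have hnen : (Finset.univ : Finset (Fin n)).Nonempty := ⟨k, Finset.mem_univ k⟩
    set mh : ℝ := - pay v y jh with hmh
    have hmh0 : 0 < mh := by rw [hmh]; linarith
    set μm : ℝ := Finset.univ.sup' hnen (fun j => - pay v y j) with hμm
    have hμge : ∀ j, - pay v y j ≤ μm :=
      fun j => Finset.le_sup' (f := fun j' => - pay v y j') (Finset.mem_univ j)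
    have hμpos : 0 < μm + 1 := by
      have := hμge jh
      rw [← hmh] at this
      linarith
    set lam : ℝ := (μm + 1) / mh with hlam
    have hlam0 : 0 < lam := div_pos hμpos hmh0
    set Lam : ℝ := lam * q k / q jh + 1 with hLam
    have hLam0 : 0 < Lam := by
      have h1 : 0 ≤ lam * q k / q jh :=
        div_nonneg (mul_nonneg (le_of_lt hlam0) (hq0 k)) (le_of_lt hqjh)
      rw [hLam]; linarith
    set uF : Fin m → Fin n → ℝ := fun i j =>
      if j = k then -(lam * v i jh) - Lam * v i k
      else if j = jh then -(lam * v i jh) else - v i j with huF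
    -- pay computations
    have hpayk : ∀ x : Fin m → ℝ, pay uF x k = -(lam * pay v x jh) - Lam * pay v x k := by
      intro x
      unfold pay
      simp only [huF, if_pos rfl]
      have h0 : ∀ i ∈ Finset.univ, x i * (-(lam * v i jh) - Lam * v i k)
          = (-lam) * (x i * v i jh) + (-Lam) * (x i * v i k) := fun i _ => by ring
      rw [Finset.sum_congr rfl h0, Finset.sum_add_distrib, ← Finset.mul_sum, ← Finset.mul_sum]
      ring
    have hpayjh : ∀ x : Fin m → ℝ, pay uF x jh = -(lam * pay v x jh) := by
      intro x
      unfold pay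
      simp only [huF, if_neg hjhk, if_pos rfl, eq_self_iff_true, if_true]
      have h0 : ∀ i ∈ Finset.univ, x i * (-(lam * v i jh))
          = (-lam) * (x i * v i jh) := fun i _ => by ring
      rw [Finset.sum_congr rfl h0, ← Finset.mul_sum]
      ring
    have hpayo : ∀ x : Fin m → ℝ, ∀ j, j ≠ k → j ≠ jh → pay uF x j = - pay v x j := by
      intro x j h1 h2
      unfold pay
      simp only [huF, if_neg h1, if_neg h2]
      have h0 : ∀ i ∈ Finset.univ, x i * (- v i j)
          = (-1 : ℝ) * (x i * v i j) := fun i _ => by ring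
      rw [Finset.sum_congr rfl h0, ← Finset.mul_sum]
      ring
    have hlammh : lam * mh = μm + 1 := by
      rw [hlam, div_mul_cancel₀ _ (ne_of_gt hmh0)]
    refine ⟨uF, hy, ?_, ?_⟩
    · -- k ∈ BR uF y
      intro j'
      have hyjh : pay v y jh = - mh := by rw [hmh]; ring
      have hk : pay uF y k = μm + 1 := by
        rw [hpayk y, hyk0, hyjh, mul_neg, neg_neg, mul_zero, sub_zero, hlammh]
      rw [hk]
      by_cases h1 : j' = k
      · rw [h1, hk]
      · by_cases h2 : j' = jh
        · rw [h2, hpayjh y, hyjh, mul_neg, neg_neg, hlammh]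
        · rw [hpayo y j' h1 h2]
          have := hμge j'
          linarith
    · -- optimality
      intro x' hx' j' hj'
      rw [hyk0]
      by_contra hpos
      push_neg at hpos
      by_cases hjk : j' = k
      · -- k with positive value: beaten by jh column
        rw [hjk] at hpos
        have h1 := hj' jh
        rw [hjk] at h1
        rw [hpayjh x', hpayk x'] at h1
        nlinarith [mul_pos hLam0 hpos]
      · -- j' ≠ k
        by_cases hwit : ∃ j₀, j₀ ≠ k ∧ pay v x' j₀ ≤ 0
        · obtain ⟨j₀, hj₀k, hj₀⟩ := hwit
          have hj₀pay : 0 ≤ pay uF x' j₀ := by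
            by_cases h2 : j₀ = jh
            · rw [h2, hpayjh x']
              rw [h2] at hj₀
              nlinarith
            · rw [hpayo x' j₀ hj₀k h2]
              linarith
          have hj'pay : pay uF x' j' < 0 := by
            by_cases h2 : j' = jh
            · rw [h2, hpayjh x']
              rw [h2] at hpos
              nlinarith
            · rw [hpayo x' j' hjk h2]
              linarith
          have := hj' j₀
          linarith
        · push_neg at hwit
          -- all non-k columns positive at x'
          have hUk : pay v x' k ≤ 0 := by
            by_contra hUk
            push_neg at hUk
            have hall : ∀ j ∈ Finset.univ, 0 ≤ q j * pay v x' j := by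
              intro j _
              by_cases h2 : j = k
              · rw [h2]; exact mul_nonneg (hq0 k) (le_of_lt hUk)
              · exact mul_nonneg (hq0 j) (le_of_lt (hwit j h2))
            have hone : 0 < q jh * pay v x' jh :=
              mul_pos hqjh (hwit jh hjhk)
            have := Finset.sum_pos' hall ⟨jh, Finset.mem_univ jh, hone⟩
            linarith [hcert x' hx']
          -- certificate bound
          have hsplit : q jh * pay v x' jh + q k * pay v x' k ≤ 0 := by
            have h1 := hcert x' hx'
            have h2 : ∑ j, q j * pay v x' j
                = q jh * pay v x' jh + ∑ j ∈ Finset.univ.erase jh, q j * pay v x' j := by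
              rw [Finset.add_sum_erase Finset.univ (fun j => q j * pay v x' j) (Finset.mem_univ jh)]
            have hkmem : k ∈ Finset.univ.erase jh :=
              Finset.mem_erase.2 ⟨Ne.symm hjhk, Finset.mem_univ k⟩
            have h3 : ∑ j ∈ Finset.univ.erase jh, q j * pay v x' j
                = q k * pay v x' k + ∑ j ∈ (Finset.univ.erase jh).erase k, q j * pay v x' j := by
              rw [Finset.add_sum_erase (Finset.univ.erase jh) (fun j => q j * pay v x' j) hkmem]
            have h4 : 0 ≤ ∑ j ∈ (Finset.univ.erase jh).erase k, q j * pay v x' j := by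
              apply Finset.sum_nonneg
              intro j hj
              have hjk' : j ≠ k := (Finset.mem_erase.1 hj).1
              exact mul_nonneg (hq0 j) (le_of_lt (hwit j hjk'))
            rw [h2, h3] at h1
            linarith
          -- conclude pay uF x' k ≥ 0 > pay uF x' j'
          have hkbig : 0 ≤ pay uF x' k := by
            rw [hpayk x']
            have h5 : lam * pay v x' jh ≤ lam * (q k / q jh) * (- pay v x' k) := by
              have h6 : pay v x' jh ≤ (q k / q jh) * (- pay v x' k) := by
                rw [div_mul_eq_mul_div, le_div_iff₀ hqjh]
                nlinarith
              nlinarith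
            have h7 : Lam - 1 = lam * (q k / q jh) := by
              rw [hLam]
              field_simp
              ring
            have h8 : lam * pay v x' jh ≤ (Lam - 1) * (- pay v x' k) := by
              rw [h7]; exact h5
            nlinarith [h8]
          have hj'neg : pay uF x' j' < 0 := by
            by_cases h2 : j' = jh
            · rw [h2, hpayjh x']
              have := hwit jh hjhk
              nlinarith
            · rw [hpayo x' j' hjk h2]
              linarith [hwit j' hjk]
          have := hj' k
          linarith
  · -- fallback case: all supported non-k columns are nonnegative at y
    push_neg at hA
    set uF : Fin m → Fin n → ℝ := fun i j =>
      if j = k then - v i k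
      else if 0 < q j then - v i j else -1 with huF
    have hpayk : ∀ x : Fin m → ℝ, pay uF x k = - pay v x k := by
      intro x
      unfold pay
      simp only [huF, if_pos rfl]
      rw [← Finset.sum_neg_distrib]
      exact Finset.sum_congr rfl fun i _ => by ring
    have hpayV : ∀ x : Fin m → ℝ, ∀ j, j ≠ k → 0 < q j → pay uF x j = - pay v x j := by
      intro x j h1 h2
      unfold pay
      simp only [huF, if_neg h1, if_pos h2]
      rw [← Finset.sum_neg_distrib]
      exact Finset.sum_congr rfl fun i _ => by ring
    have hpayS : ∀ x : Fin m → ℝ, x ∈ simplex m → ∀ j, j ≠ k → ¬ (0 < q j) → pay uF x j = -1 := by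
      intro x hx j h1 h2
      unfold pay
      simp only [huF, if_neg h1, if_neg h2]
      have h3 : ∀ i ∈ Finset.univ, x i * (-1 : ℝ) = - x i := fun i _ => by ring
      rw [Finset.sum_congr rfl h3, Finset.sum_neg_distrib, hx.2]
    refine ⟨uF, hy, ?_, ?_⟩
    · -- k ∈ BR y
      intro j'
      have hk : pay uF y k = 0 := by rw [hpayk y, hyk0]; ring
      rw [hk]
      by_cases h1 : j' = k
      · rw [h1, hk]
      · by_cases h2 : 0 < q j'
        · rw [hpayV y j' h1 h2]
          have := hA j' h1 h2
          linarith
        · rw [hpayS y hy j' h1 h2]; norm_num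
    · intro x' hx' j' hj'
      rw [hyk0]
      by_contra hpos
      push_neg at hpos
      have hwit : ∃ jw, 0 ≤ pay uF x' jw := by
        by_cases hUk : pay v x' k ≤ 0
        · exact ⟨k, by rw [hpayk x']; linarith⟩
        · push_neg at hUk
          have hex : ∃ j, j ≠ k ∧ 0 < q j ∧ pay v x' j ≤ 0 := by
            by_contra hc
            push_neg at hc
            have hall : ∀ j ∈ Finset.univ, 0 ≤ q j * pay v x' j := by
              intro j _
              by_cases h2 : j = k
              · rw [h2]; exact mul_nonneg (hq0 k) (le_of_lt hUk)
              · by_cases h3 : 0 < q j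
                · exact mul_nonneg (hq0 j) (le_of_lt (hc j h2 h3))
                · have h4 : q j = 0 := le_antisymm (not_lt.1 h3) (hq0 j)
                  rw [h4, zero_mul]
            obtain ⟨js, hjs⟩ := hsupp
            have hone : 0 < q js * pay v x' js := by
              by_cases h2 : js = k
              · rw [h2] at hjs ⊢
                exact mul_pos hjs hUk
              · exact mul_pos hjs (hc js h2 hjs)
            have := Finset.sum_pos' hall ⟨js, Finset.mem_univ js, hone⟩
            linarith [hcert x' hx']
          obtain ⟨jw, h1, h2, h3⟩ := hex
          exact ⟨jw, by rw [hpayV x' jw h1 h2]; linarith⟩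
      obtain ⟨jw, hjw⟩ := hwit
      have hj'neg : pay uF x' j' < 0 := by
        by_cases h1 : j' = k
        · rw [h1, hpayk x']
          rw [h1] at hpos
          linarith
        · by_cases h2 : 0 < q j'
          · rw [hpayV x' j' h1 h2]; linarith
          · rw [hpayS x' hx' j' h1 h2]; norm_num
      have := hj' jw
      linarith

lemma pay_tuL_k {a : Fin n → Fin m → ℝ} {J : Set (Fin n)} {k : Fin n} {xstar y x : Fin m → ℝ}
    (hx : x ∈ simplex m) :
    pay (tuLdef a J k xstar y) x k = dot (a k) x - dot (a k) y := by
  unfold pay tuLdef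
  simp only [if_pos rfl, eq_self_iff_true, if_true]
  have h0 : ∀ i ∈ Finset.univ, x i * (a k i - dot (a k) y)
      = a k i * x i - dot (a k) y * x i := fun i _ => by ring
  rw [Finset.sum_congr rfl h0, Finset.sum_sub_distrib, ← Finset.mul_sum, hx.2, mul_one]
  rfl

lemma pay_tuL_mem {a : Fin n → Fin m → ℝ} {J : Set (Fin n)} {k : Fin n} {xstar y x : Fin m → ℝ}
    {j : Fin n} (hj : j ∈ J) (hjk : j ≠ k) (hx : x ∈ simplex m) :
    pay (tuLdef a J k xstar y) x j = dot (a j) x - dot (a j) xstar := by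
  unfold pay tuLdef
  simp only [if_neg hjk, if_pos hj]
  have h0 : ∀ i ∈ Finset.univ, x i * (a j i - dot (a j) xstar)
      = a j i * x i - dot (a j) xstar * x i := fun i _ => by ring
  rw [Finset.sum_congr rfl h0, Finset.sum_sub_distrib, ← Finset.mul_sum, hx.2, mul_one]
  rfl

end SurrAux

open SurrAux in
/-- the maximin value of the surrogate game ũ^L is at most 0 = ũ^L(y,k);
consequently (y,k) is inducible with respect to ũ^L. -/
theorem surrogate_maximin_le_zero {m n : ℕ}
    (uL : Fin m → Fin n → ℝ)
    (J : Set (Fin n)) (hJne : J.Nonempty)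
    (xstar : Fin m → ℝ) (hxstar : xstar ∈ simplex m)
    (hJ : ∀ j ∈ J, pay uL xstar j = Mval uL J ∧ Mval uL J = Mval uL Set.univ)
    (a : Fin n → Fin m → ℝ)
    (ha : ∀ j : Fin n,
      (∃ γ : ℝ, 0 < γ ∧ ∃ β : ℝ, ∀ x ∈ simplex m, pay uL x j = γ * dot (a j) x + β) ∨
      (Mval uL {j} = Mval uL Set.univ ∧
        a j = fun i => if ∀ i' : Fin m, uL i' j ≤ uL i j then (1 : ℝ) else 0))
    (k : Fin n) (y : Fin m → ℝ) (hy : y ∈ simplex m)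
    (hyk : Mval uL Set.univ ≤ pay uL y k) :
    Mval (tuLdef a J k xstar y) Set.univ ≤ 0 ∧
      pay (tuLdef a J k xstar y) y k = 0 ∧
      Inducible (tuLdef a J k xstar y) y k := by
  classical
  have hmne : Nonempty (Fin m) := fin_nonempty hxstar
  have hfinm : (Finset.univ : Finset (Fin m)).Nonempty := Finset.univ_nonempty
  obtain ⟨j₀, hj₀⟩ := hJne
  have hMJ : Mval uL J = Mval uL Set.univ := (hJ j₀ hj₀).2
  -- the key witness
  have hkey : ∀ x ∈ simplex m, ∃ j : Fin n, pay (tuLdef a J k xstar y) x j ≤ 0 := by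
    intro x hx
    obtain ⟨js, hjsmem, hjsmin⟩ := Finset.exists_min_image (Set.toFinite J).toFinset
      (fun j => pay uL x j) ((Set.Finite.toFinset_nonempty _).2 ⟨j₀, hj₀⟩)
    rw [Set.Finite.mem_toFinset] at hjsmem
    have hjsmin' : ∀ j ∈ J, pay uL x js ≤ pay uL x j :=
      fun j hj => hjsmin j ((Set.Finite.mem_toFinset _).2 hj)
    have hjsM : pay uL x js ≤ Mval uL Set.univ := by
      have h1 : pay uL x js ≤ minOnS uL J x := le_minOn ⟨j₀, hj₀⟩ hjsmin'
      have h2 : minOnS uL J x ≤ Mval uL J := minOn_le_Mval ⟨j₀, hj₀⟩ hx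
      rw [hMJ] at h2
      linarith
    by_cases hjk : js = k
    · refine ⟨k, ?_⟩
      rw [pay_tuL_k hx]
      rw [hjk] at hjsM hjsmem
      rcases ha k with ⟨γ, hγ, β, hlin⟩ | ⟨hMs, has⟩
      · have e1 := hlin x hx
        have e2 := hlin y hy
        by_contra hcon
        push_neg at hcon
        have h3 : 0 < γ * (dot (a k) x - dot (a k) y) := mul_pos hγ hcon
        have h4 : γ * (dot (a k) x - dot (a k) y) = pay uL x k - pay uL y k := by
          rw [e1, e2]; ring
        have h5 : pay uL y k ≥ Mval uL Set.univ := hyk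
        linarith
      · -- indicator case for k
        have hsup : Mval uL {k} = Finset.univ.sup' hfinm (fun i => uL i k) :=
          Mval_singleton hmne k
        have hMeq : Finset.univ.sup' hfinm (fun i => uL i k) = Mval uL Set.univ := by
          rw [← hsup, hMs]
        have hge : Finset.univ.sup' hfinm (fun i => uL i k) ≤ pay uL y k := by
          rw [hMeq]; exact hyk
        have hsupp := support_subset hy hfinm hge
        have hdy : dot (a k) y = 1 := by
          rw [has]
          exact dot_indicator_eq hy (fun i hi => hsupp i hi)
        have hdx : dot (a k) x ≤ 1 := by
          rw [has]
          exact dot_indicator_le hx _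
        linarith
    · refine ⟨js, ?_⟩
      rw [pay_tuL_mem hjsmem hjk hx]
      have hxs : pay uL xstar js = Mval uL Set.univ := by
        rw [(hJ js hjsmem).1, hMJ]
      rcases ha js with ⟨γ, hγ, β, hlin⟩ | ⟨hMs, has⟩
      · have e1 := hlin x hx
        have e2 := hlin xstar hxstar
        by_contra hcon
        push_neg at hcon
        have h3 : 0 < γ * (dot (a js) x - dot (a js) xstar) := mul_pos hγ hcon
        have h4 : γ * (dot (a js) x - dot (a js) xstar) = pay uL x js - pay uL xstar js := by
          rw [e1, e2]; ring
        rw [hxs] at h4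
        linarith
      · have hsup : Mval uL {js} = Finset.univ.sup' hfinm (fun i => uL i js) :=
          Mval_singleton hmne js
        have hMeq : Finset.univ.sup' hfinm (fun i => uL i js) = Mval uL Set.univ := by
          rw [← hsup, hMs]
        have hge : Finset.univ.sup' hfinm (fun i => uL i js) ≤ pay uL xstar js := by
          rw [hMeq, hxs]
        have hsupp := support_subset hxstar hfinm hge
        have hdxs : dot (a js) xstar = 1 := by
          rw [has]
          exact dot_indicator_eq hxstar (fun i hi => hsupp i hi)
        have hdx : dot (a js) x ≤ 1 := by
          rw [has]
          exact dot_indicator_le hx _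
        linarith
  have part1 : Mval (tuLdef a J k xstar y) Set.univ ≤ 0 := by
    apply Mval_le ⟨xstar, hxstar⟩
    intro x hx
    obtain ⟨j, hj⟩ := hkey x hx
    exact (minOn_le_pay (Set.mem_univ j)).trans hj
  have part2 : pay (tuLdef a J k xstar y) y k = 0 := by
    rw [pay_tuL_k hy]; ring
  refine ⟨part1, part2, ?_⟩
  obtain ⟨q, hq0, hq1, hqi⟩ := exists_cert (tuLdef a J k xstar y) ⟨k⟩ ⟨xstar, hxstar⟩ part1
  exact inducible_of_cert (tuLdef a J k xstar y) y k hy part2 q hq0 hq1 hqi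
end
end

section
/- Suppose J ⊆ [n] and x* ∈ Δ_m satisfy u^L(x*,j) = M_J = M_{[n]} for all j ∈ J; suppose for every j ∈ [n] a vector ã_j ∈ ℝ^m is given such that either there exist γ_j > 0 and β_j ∈ ℝ with u^L(x,j) = γ_j·(ã_j·x) + β_j for all x ∈ Δ_m, or M_{{j}} = M_{[n]} and ã_j is the 0/1 indicator vector of I_j = argmax_{i∈[m]} u^L(i,j). Let k ∈ [n], y ∈ Δ_m with u^L(y,k) ≥ M_{[n]}, and define ũ^L(x,j) = ã_j·x − ã_j·x* for j ∈ J\{k}, ũ^L(x,k) = ã_k·x − ã_k·y, and ũ^L(x,j) = 1 for j ∉ J∪{k}. Then for every follower payoff function ũ^F : Fin m → Fin n → ℝ, if (y,k) is an SSE of (ũ^L, ũ^F), then (y,k) is an SSE of (u^L, ũ^F). -/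
open scoped Classical
open Finset

noncomputable section

lemma pay_le_abs_sum {m n : ℕ} (u : Fin m → Fin n → ℝ) (j : Fin n)
    {x : Fin m → ℝ} (hx : x ∈ simplex m) : pay u x j ≤ ∑ i, |u i j| := by
  unfold pay
  apply Finset.sum_le_sum
  intro i _
  have hx1 : x i ≤ 1 := by
    have := Finset.single_le_sum (f := x) (fun i _ => hx.1 i) (Finset.mem_univ i)
    rwa [hx.2] at this
  calc x i * u i j ≤ x i * |u i j| :=
        mul_le_mul_of_nonneg_left (le_abs_self _) (hx.1 i)
    _ ≤ 1 * |u i j| := mul_le_mul_of_nonneg_right hx1 (abs_nonneg _)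
    _ = |u i j| := one_mul _

lemma pay_le_Mval_singleton {m n : ℕ} (u : Fin m → Fin n → ℝ) (j : Fin n)
    {x : Fin m → ℝ} (hx : x ∈ simplex m) : pay u x j ≤ Mval u {j} := by
  have himg : minOnS u {j} '' simplex m = (fun z => pay u z j) '' simplex m := by
    apply Set.image_congr
    intro z _
    simp [minOnS]
  unfold Mval
  rw [himg]
  apply le_csSup
  · refine ⟨∑ i, |u i j|, ?_⟩
    rintro _ ⟨z, hz, rfl⟩
    exact pay_le_abs_sum u j hz
  · exact ⟨x, hx, rfl⟩

lemma pay_sub_const {m : ℕ} (b : Fin m → ℝ) (c : ℝ) (x : Fin m → ℝ) :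
    (∑ i, x i * (b i - c)) = dot b x - (∑ i, x i) * c := by
  simp [dot, mul_sub, Finset.sum_sub_distrib, ← Finset.sum_mul, mul_comm, Finset.mul_sum]

lemma pay_tuL_k {m n : ℕ} (a : Fin n → Fin m → ℝ) (J : Set (Fin n)) (k : Fin n)
    (xstar y x : Fin m → ℝ) :
    pay (tuLdef a J k xstar y) x k = dot (a k) x - (∑ i, x i) * dot (a k) y := by
  rw [← pay_sub_const]
  unfold pay tuLdef
  refine Finset.sum_congr rfl fun i _ => ?_
  rw [if_pos rfl]

lemma pay_tuL_J {m n : ℕ} (a : Fin n → Fin m → ℝ) (J : Set (Fin n)) {k j : Fin n}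
    (hk : j ≠ k) (hj : j ∈ J) (xstar y x : Fin m → ℝ) :
    pay (tuLdef a J k xstar y) x j = dot (a j) x - (∑ i, x i) * dot (a j) xstar := by
  rw [← pay_sub_const]
  unfold pay tuLdef
  refine Finset.sum_congr rfl fun i _ => ?_
  rw [if_neg hk, if_pos hj]

lemma pay_tuL_out {m n : ℕ} (a : Fin n → Fin m → ℝ) (J : Set (Fin n)) {k j : Fin n}
    (hk : j ≠ k) (hj : j ∉ J) (xstar y x : Fin m → ℝ) :
    pay (tuLdef a J k xstar y) x j = ∑ i, x i := by
  unfold pay tuLdef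
  refine Finset.sum_congr rfl fun i _ => ?_
  rw [if_neg hk, if_neg hj, mul_one]

/-- any SSE witness (y,k) for the surrogate game (ũ^L, ũ^F)
is also an SSE of the true game (u^L, ũ^F). -/
theorem sse_surrogate_implies_sse_true {m n : ℕ}
    (uL : Fin m → Fin n → ℝ)
    (J : Set (Fin n)) (hJne : J.Nonempty)
    (xstar : Fin m → ℝ) (hxstar : xstar ∈ simplex m)
    (hJ : ∀ j ∈ J, pay uL xstar j = Mval uL J ∧ Mval uL J = Mval uL Set.univ)
    (a : Fin n → Fin m → ℝ)
    (ha : ∀ j : Fin n,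
      (∃ γ : ℝ, 0 < γ ∧ ∃ β : ℝ, ∀ x ∈ simplex m, pay uL x j = γ * dot (a j) x + β) ∨
      (Mval uL {j} = Mval uL Set.univ ∧
        a j = fun i => if ∀ i' : Fin m, uL i' j ≤ uL i j then (1 : ℝ) else 0))
    (k : Fin n) (y : Fin m → ℝ) (hy : y ∈ simplex m)
    (hyk : Mval uL Set.univ ≤ pay uL y k) :
    ∀ uF : Fin m → Fin n → ℝ,
      SSE (tuLdef a J k xstar y) uF y k → SSE uL uF y k := by
  intro uF hsse
  obtain ⟨hy', hBR, hmax⟩ := hsse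
  refine ⟨hy', hBR, ?_⟩
  intro x' hx' j' hj'
  have key := hmax x' hx' j' hj'
  have h0 : pay (tuLdef a J k xstar y) y k = 0 := by
    rw [pay_tuL_k, hy.2, one_mul, sub_self]
  rw [h0] at key
  -- key : pay ũL x' j' ≤ 0
  by_cases hk : j' = k
  · subst hk
    have hcomp : pay (tuLdef a J j' xstar y) x' j' = dot (a j') x' - dot (a j') y := by
      rw [pay_tuL_k, hx'.2, one_mul]
    rw [hcomp] at key
    have hdot : dot (a j') x' ≤ dot (a j') y := by linarith
    rcases ha j' with ⟨γ, hγ, β, hlin⟩ | ⟨hM, _⟩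
    · rw [hlin x' hx', hlin y hy']
      nlinarith
    · calc pay uL x' j' ≤ Mval uL {j'} := pay_le_Mval_singleton uL j' hx'
        _ = Mval uL Set.univ := hM
        _ ≤ pay uL y j' := hyk
  · by_cases hJ' : j' ∈ J
    · have hcomp : pay (tuLdef a J k xstar y) x' j' = dot (a j') x' - dot (a j') xstar := by
        unfold pay tuLdef
        simp only [if_neg hk, if_pos hJ']
        rw [pay_sub_const, hx'.2, one_mul]
      rw [hcomp] at key
      have hdot : dot (a j') x' ≤ dot (a j') xstar := by linarith
      obtain ⟨hJ1, hJ2⟩ := hJ j' hJ'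
      rcases ha j' with ⟨γ, hγ, β, hlin⟩ | ⟨hM, _⟩
      · have h1 : pay uL x' j' ≤ pay uL xstar j' := by
          rw [hlin x' hx', hlin xstar hxstar]
          nlinarith
        calc pay uL x' j' ≤ pay uL xstar j' := h1
          _ = Mval uL J := hJ1
          _ = Mval uL Set.univ := hJ2
          _ ≤ pay uL y k := hyk
      · calc pay uL x' j' ≤ Mval uL {j'} := pay_le_Mval_singleton uL j' hx'
          _ = Mval uL Set.univ := hM
          _ ≤ pay uL y k := hyk
    · exfalso
      have hcomp : pay (tuLdef a J k xstar y) x' j' = 1 := by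
        rw [pay_tuL_out a J hk hJ', hx'.2]
      rw [hcomp] at key
      linarith
end
end

section
/- Assume 1 < m₁ ≤ m, u^L(i,n) = M_{{n}} for all i ∈ {m₁,…,m}, and u^L(i,n) < M_{{n}} for all i ∈ {1,…,m₁−1}, where M_{{n}} = max_{i∈[m]} u^L(i,n). Suppose x^1,…,x^{m₁−1} ∈ Δ_m satisfy: (a) u^L(x^1,n) = ⋯ = u^L(x^{m₁−1},n); (b) x^i_i > 0 for all i ∈ [m₁−1]; and (c) 1 − x^i_i = Σ_{k=m₁}^m x^i_k for all i ∈ [m₁−1]. Let b = (−1/x^1_1, −1/x^2_2, …, −1/x^{m₁−1}_{m₁−1}, 0, …, 0) ∈ ℝ^m. Then there exist γ > 0 and β ∈ ℝ such that u^L(x,n) = γ·(b·x) + β for all x ∈ Δ_m. -/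
open scoped Classical
open Finset

noncomputable section

/-- the critical points x^1,…,x^{m₁−1} determine the direction of the
gradient of u^L(·,n): u^L(x,n) = γ·(b·x) + β with b = (−1/x^1_1, …, −1/x^{m₁−1}_{m₁−1}, 0, …, 0).
(Indices are 0-based: the paper's action i ∈ [m₁−1] is the index i with (i:ℕ) < m₁−1, and the
paper's actions m₁,…,m are the indices k with m₁−1 ≤ (k:ℕ).) -/
theorem gradient_from_critical_points {m n : ℕ}
    (uL : Fin m → Fin n → ℝ) (jn : Fin n)
    (m₁ : ℕ) (hm₁ : 1 < m₁) (hm₁m : m₁ ≤ m)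
    (Mn : ℝ)
    (hhigh : ∀ i : Fin m, m₁ - 1 ≤ (i : ℕ) → uL i jn = Mn)
    (hlow : ∀ i : Fin m, (i : ℕ) < m₁ - 1 → uL i jn < Mn)
    (xs : Fin m → Fin m → ℝ)
    (hxsΔ : ∀ i : Fin m, (i : ℕ) < m₁ - 1 → xs i ∈ simplex m)
    (hA : ∀ i i' : Fin m, (i : ℕ) < m₁ - 1 → (i' : ℕ) < m₁ - 1 →
      pay uL (xs i) jn = pay uL (xs i') jn)
    (hB : ∀ i : Fin m, (i : ℕ) < m₁ - 1 → 0 < xs i i)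
    (hC : ∀ i : Fin m, (i : ℕ) < m₁ - 1 →
      1 - xs i i = ∑ k ∈ Finset.univ.filter (fun k : Fin m => m₁ - 1 ≤ (k : ℕ)), xs i k) :
    ∃ γ : ℝ, 0 < γ ∧ ∃ β : ℝ, ∀ x ∈ simplex m,
      pay uL x jn =
        γ * dot (fun i => if (i : ℕ) < m₁ - 1 then -1 / xs i i else 0) x + β := by
  have hm : 0 < m := lt_of_lt_of_le (by omega : 0 < m₁) hm₁m
  set i₀ : Fin m := ⟨0, hm⟩ with hi₀def
  have hi₀ : (i₀ : ℕ) < m₁ - 1 := by simp [hi₀def]; omega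
  -- key: payoff at critical point
  have key : ∀ i : Fin m, (i : ℕ) < m₁ - 1 →
      pay uL (xs i) jn = Mn - xs i i * (Mn - uL i jn) := by
    intro i hi
    obtain ⟨hnn, hsum⟩ := hxsΔ i hi
    have hsplit := Finset.sum_filter_add_sum_filter_not Finset.univ
      (fun k : Fin m => m₁ - 1 ≤ (k : ℕ)) (xs i)
    have hCi := hC i hi
    have hlowsum : ∑ k ∈ Finset.univ.filter (fun k : Fin m => ¬ (m₁ - 1 ≤ (k : ℕ))), xs i k
        = xs i i := by
      have : (∑ k ∈ Finset.univ.filter (fun k : Fin m => m₁ - 1 ≤ (k : ℕ)), xs i k)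
          + (∑ k ∈ Finset.univ.filter (fun k : Fin m => ¬ (m₁ - 1 ≤ (k : ℕ))), xs i k) = 1 := by
        rw [hsplit]; exact hsum
      linarith
    have hmem : i ∈ Finset.univ.filter (fun k : Fin m => ¬ (m₁ - 1 ≤ (k : ℕ))) := by
      simp; omega
    have hzero : ∀ j : Fin m, (j : ℕ) < m₁ - 1 → j ≠ i → xs i j = 0 := by
      intro j hj hji
      have herase : ∑ k ∈ (Finset.univ.filter (fun k : Fin m => ¬ (m₁ - 1 ≤ (k : ℕ)))).erase i,
          xs i k = 0 := by
        have := Finset.add_sum_erase _ (xs i) hmem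
        linarith [hlowsum]
      have hjmem : j ∈ (Finset.univ.filter (fun k : Fin m => ¬ (m₁ - 1 ≤ (k : ℕ)))).erase i := by
        simp [hji]; omega
      have := (Finset.sum_eq_zero_iff_of_nonneg (fun k _ => hnn k)).mp herase j hjmem
      exact this
    -- compute payoff
    have hpay : pay uL (xs i) jn
        = (∑ k ∈ Finset.univ.filter (fun k : Fin m => m₁ - 1 ≤ (k : ℕ)), xs i k * uL k jn)
        + (∑ k ∈ Finset.univ.filter (fun k : Fin m => ¬ (m₁ - 1 ≤ (k : ℕ))), xs i k * uL k jn) := by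
      rw [pay, ← Finset.sum_filter_add_sum_filter_not Finset.univ
        (fun k : Fin m => m₁ - 1 ≤ (k : ℕ))]
    have h1 : (∑ k ∈ Finset.univ.filter (fun k : Fin m => m₁ - 1 ≤ (k : ℕ)), xs i k * uL k jn)
        = (1 - xs i i) * Mn := by
      rw [hCi, Finset.sum_mul]
      apply Finset.sum_congr rfl
      intro k hk
      simp only [Finset.mem_filter] at hk
      rw [hhigh k hk.2]
    have h2 : (∑ k ∈ Finset.univ.filter (fun k : Fin m => ¬ (m₁ - 1 ≤ (k : ℕ))), xs i k * uL k jn)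
        = xs i i * uL i jn := by
      apply Finset.sum_eq_single_of_mem i hmem
      intro k hk hki
      simp only [Finset.mem_filter] at hk
      rw [hzero k (by omega) hki, zero_mul]
    rw [hpay, h1, h2]; ring
  refine ⟨xs i₀ i₀ * (Mn - uL i₀ jn), ?_, Mn, ?_⟩
  · exact mul_pos (hB i₀ hi₀) (by linarith [hlow i₀ hi₀])
  intro x hx
  obtain ⟨hnn, hsum⟩ := hx
  have vertex : ∀ j : Fin m, uL j jn
      = xs i₀ i₀ * (Mn - uL i₀ jn) * (if (j : ℕ) < m₁ - 1 then -1 / xs j j else 0) + Mn := by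
    intro j
    by_cases hj : (j : ℕ) < m₁ - 1
    · have hne : xs j j ≠ 0 := ne_of_gt (hB j hj)
      have heq : Mn - xs j j * (Mn - uL j jn) = Mn - xs i₀ i₀ * (Mn - uL i₀ jn) := by
        rw [← key j hj, ← key i₀ hi₀]; exact hA j i₀ hj hi₀
      have : xs j j * (Mn - uL j jn) = xs i₀ i₀ * (Mn - uL i₀ jn) := by linarith
      rw [if_pos hj]
      field_simp
      linarith [this]
    · rw [if_neg hj, mul_zero, zero_add]
      exact hhigh j (by omega)
  have : pay uL x jn = ∑ i, x i * (xs i₀ i₀ * (Mn - uL i₀ jn) *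
      (if (i : ℕ) < m₁ - 1 then -1 / xs i i else 0) + Mn) := by
    rw [pay]
    exact Finset.sum_congr rfl fun i _ => by rw [← vertex i]
  rw [this, dot]
  simp only [mul_add, Finset.sum_add_distrib, ← Finset.sum_mul, hsum, Finset.mul_sum]
  ring_nf
  congr 1
  apply Finset.sum_congr rfl
  intro i _
  ring_nf
end
end

section
/- With the construction of ũ_g^F below: for every g ∈ ℝ^{m₁−1}, every i ∈ [m₁−1], and every x ∈ Γ_i ∩ f_g^{-1}(n), one has x_i > 0. Moreover, if g_i > 0 then Γ_i ∩ f_g^{-1}(n) ≠ ∅. -/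
open scoped Classical
open Finset

noncomputable section

/-- The facet Γ_i = {x ∈ Δ_m : 1 − x_i = Σ_{k=m₁}^m x_k} (0-based indices: the paper's
actions m₁,…,m are the indices k with m₁−1 ≤ (k:ℕ)). -/
def GammaSet {m : ℕ} (m₁ : ℕ) (i : Fin m) : Set (Fin m → ℝ) :=
  {x ∈ simplex m |
    1 - x i = ∑ k ∈ Finset.univ.filter (fun k : Fin m => m₁ - 1 ≤ (k : ℕ)), x k}

/-- W = min_{i∈[m], j∈[n]} μ(i,j) − 1. -/
def Wmin {m n : ℕ} (μ : Fin m → Fin n → ℝ) : ℝ :=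
  sInf (Set.range fun p : Fin m × Fin n => μ p.1 p.2) - 1

/-- The follower payoff ũ_g^F (as a matrix; on Δ_m its linear extension is
ũ_g^F(x,j) = Σ_{i=m₁}^m x_i·μ(i,j) for j ≠ n and
ũ_g^F(x,n) = Σ_{i=1}^{m₁−1} x_i·g_i + W·Σ_{i=m₁}^m x_i). -/
def tuFg {m n : ℕ} (m₁ : ℕ) (μ : Fin m → Fin n → ℝ) (jn : Fin n) (g : Fin m → ℝ) :
    Fin m → Fin n → ℝ :=
  fun i j =>
    if j = jn then (if (i : ℕ) < m₁ - 1 then g i else Wmin μ)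
    else (if (i : ℕ) < m₁ - 1 then 0 else μ i j)

/-- f_g^{-1}(n) = {x ∈ Δ_m : n ∈ f_g(x)} where f_g is the BR-correspondence of ũ_g^F. -/
def finv {m n : ℕ} (m₁ : ℕ) (μ : Fin m → Fin n → ℝ) (jn : Fin n) (g : Fin m → ℝ) :
    Set (Fin m → ℝ) :=
  {x ∈ simplex m | jn ∈ BR (tuFg m₁ μ jn g) x}

/-- for every g and every i ∈ [m₁−1], every x ∈ Γ_i ∩ f_g^{-1}(n) has x_i > 0;
moreover, if g_i > 0 then Γ_i ∩ f_g^{-1}(n) ≠ ∅. -/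
theorem xi_pos_and_nonempty {m n : ℕ}
    (uL : Fin m → Fin n → ℝ) (jn : Fin n)
    (m₁ : ℕ) (hm₁ : 1 < m₁) (hm₁m : m₁ ≤ m)
    (Mn : ℝ)
    (hhigh : ∀ i : Fin m, m₁ - 1 ≤ (i : ℕ) → uL i jn = Mn)
    (hlow : ∀ i : Fin m, (i : ℕ) < m₁ - 1 → uL i jn < Mn)
    (μ : Fin m → Fin n → ℝ) (hμ : IsProperCover uL μ {jn})
    (g : Fin m → ℝ) (i : Fin m) (hi : (i : ℕ) < m₁ - 1) :
    (∀ x ∈ GammaSet m₁ i ∩ finv m₁ μ jn g, 0 < x i) ∧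
      (0 < g i → (GammaSet m₁ i ∩ finv m₁ μ jn g).Nonempty) := by
  have hm : 0 < m := lt_of_lt_of_le (lt_of_lt_of_le one_pos hm₁.le) hm₁m
  -- W + 1 ≤ μ k j for all k, j
  have hW : ∀ (k : Fin m) (j : Fin n), Wmin μ + 1 ≤ μ k j := by
    intro k j
    have : sInf (Set.range fun p : Fin m × Fin n => μ p.1 p.2) ≤ μ k j :=
      csInf_le (Set.finite_range _).bddBelow ⟨(k, j), rfl⟩
    simpa [Wmin] using this
  -- there exists j ≠ jn
  obtain ⟨j₀, hj₀⟩ : ∃ j₀ : Fin n, j₀ ≠ jn := by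
    by_contra h
    push_neg at h
    have hy : (fun _ : Fin m => (m : ℝ)⁻¹) ∈ simplex m := by
      constructor
      · intro k; positivity
      · simp [Finset.sum_const, Finset.card_univ]
        field_simp
    exact hμ.2 _ hy jn rfl (fun j' => by rw [h j'])
  constructor
  · rintro x ⟨⟨hxs, hxΓ⟩, _, hxBR⟩
    rcases lt_or_ge 0 (x i) with h | h
    · exact h
    exfalso
    have hxi : x i = 0 := le_antisymm h (hxs.1 i)
    -- sum over low indices equals x i = 0
    have hsplit := Finset.sum_filter_add_sum_filter_not Finset.univ
      (fun k : Fin m => m₁ - 1 ≤ (k : ℕ)) x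
    rw [hxs.2] at hsplit
    have hlowsum : ∑ k ∈ Finset.univ.filter (fun k : Fin m => ¬ m₁ - 1 ≤ (k : ℕ)), x k = 0 := by
      have := hxΓ
      linarith
    have hlowzero : ∀ k : Fin m, (k : ℕ) < m₁ - 1 → x k = 0 := by
      intro k hk
      have hmem : k ∈ Finset.univ.filter (fun k : Fin m => ¬ m₁ - 1 ≤ (k : ℕ)) := by
        simp only [Finset.mem_filter, Finset.mem_univ, true_and]
        exact Nat.not_le.mpr hk
      exact (Finset.sum_eq_zero_iff_of_nonneg (fun k _ => hxs.1 k)).1 hlowsum k hmem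
    have hhighsum : ∑ k, x k * Wmin μ = Wmin μ := by
      rw [← Finset.sum_mul, hxs.2, one_mul]
    -- pay at jn equals Wmin μ
    have hpayjn : pay (tuFg m₁ μ jn g) x jn = Wmin μ := by
      rw [← hhighsum]
      refine Finset.sum_congr rfl (fun k _ => ?_)
      unfold tuFg
      by_cases hk : (k : ℕ) < m₁ - 1
      · simp [hk, hlowzero k hk]
      · simp [hk]
    -- pay at j₀ at least Wmin μ + 1
    have hpayj₀ : Wmin μ + 1 ≤ pay (tuFg m₁ μ jn g) x j₀ := by
      have : ∑ k, x k * (Wmin μ + 1) ≤ pay (tuFg m₁ μ jn g) x j₀ := by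
        unfold pay
        refine Finset.sum_le_sum (fun k _ => ?_)
        unfold tuFg
        by_cases hk : (k : ℕ) < m₁ - 1
        · simp [hk, hj₀, hlowzero k hk]
        · simp only [if_neg hj₀, if_neg hk]
          exact mul_le_mul_of_nonneg_left (hW k j₀) (hxs.1 k)
      calc Wmin μ + 1 = ∑ k, x k * (Wmin μ + 1) := by
            rw [← Finset.sum_mul, hxs.2, one_mul]
        _ ≤ _ := this
    have := hxBR j₀
    rw [hpayjn] at this
    linarith
  · intro hg
    refine ⟨fun k => if k = i then 1 else 0, ?_, ?_⟩
    · constructor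
      · constructor
        · intro k; by_cases hk : k = i <;> simp [hk]
        · simp
      · rw [Finset.sum_eq_zero]
        · simp
        · intro k hk
          have : ¬ k = i := by
            rintro rfl
            simp only [Finset.mem_filter] at hk
            exact absurd hk.2 (Nat.not_le.mpr hi)
          simp [this]
    · have hpay : ∀ j : Fin n, pay (tuFg m₁ μ jn g) (fun k => if k = i then 1 else 0) j
          = tuFg m₁ μ jn g i j := by
        intro j
        unfold pay
        rw [Finset.sum_eq_single i]
        · simp
        · intro k _ hk; simp [hk]
        · simp
      refine ⟨?_, fun j' => ?_⟩
      · constructor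
        · intro k; by_cases hk : k = i <;> simp [hk]
        · simp
      · rw [hpay, hpay]
        unfold tuFg
        by_cases hj : j' = jn
        · simp [hj]
        · simp [hj, hi]
          positivity
end
end

section
/- With the construction of ũ_g^F below: for every g ∈ ℝ^{m₁−1} with all coordinates strictly positive, and for any choice of x^i ∈ argmin_{x ∈ Γ_i ∩ f_g^{-1}(n)} x_i for each i ∈ [m₁−1], one has max_{x ∈ f_g^{-1}(n)} u^L(x,n) = max_{i ∈ [m₁−1]} u^L(x^i,n). -/
open scoped Classical
open Finset

noncomputable section

section S8aux

variable {m n : ℕ}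

lemma S8.filter_not_lt (m₁ : ℕ) :
    (univ.filter fun i : Fin m => ¬ (i:ℕ) < m₁ - 1)
      = univ.filter (fun i : Fin m => m₁ - 1 ≤ (i : ℕ)) := by
  ext i; simp [not_lt]

lemma S8.sum_split (m₁ : ℕ) (f : Fin m → ℝ) :
    ∑ i, f i = ∑ i ∈ univ.filter (fun i : Fin m => (i:ℕ) < m₁ - 1), f i
      + ∑ i ∈ univ.filter (fun i : Fin m => m₁ - 1 ≤ (i : ℕ)), f i := by
  rw [← S8.filter_not_lt m₁, Finset.sum_filter_add_sum_filter_not]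

lemma S8.Wmin_le (μ : Fin m → Fin n → ℝ) (i : Fin m) (j : Fin n) : Wmin μ + 1 ≤ μ i j := by
  unfold Wmin
  have h1 : BddBelow (Set.range fun p : Fin m × Fin n => μ p.1 p.2) :=
    (Set.finite_range _).bddBelow
  have h2 := csInf_le h1 ⟨(i, j), rfl⟩
  linarith

lemma S8.pay_tuFg_ne (m₁ : ℕ) (μ : Fin m → Fin n → ℝ) (jn : Fin n) (g x : Fin m → ℝ)
    {j : Fin n} (hj : j ≠ jn) :
    pay (tuFg m₁ μ jn g) x j
      = ∑ k ∈ univ.filter (fun k : Fin m => m₁ - 1 ≤ (k : ℕ)), x k * μ k j := by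
  unfold pay tuFg
  simp only [if_neg hj]
  rw [Finset.sum_filter]
  refine Finset.sum_congr rfl fun i _ => ?_
  by_cases h : (i : ℕ) < m₁ - 1
  · simp [h, Nat.not_le.mpr h]
  · simp [h, Nat.le_of_not_lt h]

lemma S8.pay_tuFg_jn (m₁ : ℕ) (μ : Fin m → Fin n → ℝ) (jn : Fin n) (g x : Fin m → ℝ) :
    pay (tuFg m₁ μ jn g) x jn
      = (∑ i ∈ univ.filter (fun i : Fin m => (i:ℕ) < m₁ - 1), x i * g i)
        + (∑ k ∈ univ.filter (fun k : Fin m => m₁ - 1 ≤ (k : ℕ)), x k) * Wmin μ := by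
  unfold pay tuFg
  rw [S8.sum_split m₁, Finset.sum_mul]
  congr 1
  · refine Finset.sum_congr rfl fun i hi => ?_
    rw [if_pos rfl, if_pos (Finset.mem_filter.1 hi).2]
  · refine Finset.sum_congr rfl fun i hi => ?_
    rw [if_pos rfl, if_neg (not_lt.2 (Finset.mem_filter.1 hi).2)]

lemma S8.pay_uL (m₁ : ℕ) (uL : Fin m → Fin n → ℝ) (jn : Fin n) {Mn : ℝ}
    (hhigh : ∀ i : Fin m, m₁ - 1 ≤ (i : ℕ) → uL i jn = Mn) (x : Fin m → ℝ) :
    pay uL x jn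
      = (∑ i ∈ univ.filter (fun i : Fin m => (i:ℕ) < m₁ - 1), x i * uL i jn)
        + (∑ k ∈ univ.filter (fun k : Fin m => m₁ - 1 ≤ (k : ℕ)), x k) * Mn := by
  unfold pay
  rw [S8.sum_split m₁, Finset.sum_mul]
  congr 1
  refine Finset.sum_congr rfl fun i hi => ?_
  rw [hhigh i (Finset.mem_filter.1 hi).2]

end S8aux


section S8aux2

variable {m n : ℕ}

/-- For x in the simplex, the leader payoff at jn equals Mn minus the low-coordinate loss. -/
lemma S8.payB (m₁ : ℕ) (uL : Fin m → Fin n → ℝ) (jn : Fin n) {Mn : ℝ}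
    (hhigh : ∀ i : Fin m, m₁ - 1 ≤ (i : ℕ) → uL i jn = Mn)
    (x : Fin m → ℝ) (hx : x ∈ simplex m) :
    pay uL x jn
      = Mn - ∑ k ∈ univ.filter (fun i : Fin m => (i:ℕ) < m₁ - 1), x k * (Mn - uL k jn) := by
  obtain ⟨hx0, hx1⟩ := hx
  rw [S8.pay_uL m₁ uL jn hhigh x]
  have hsum : (∑ k ∈ univ.filter (fun i : Fin m => (i:ℕ) < m₁ - 1), x k)
      + (∑ k ∈ univ.filter (fun k : Fin m => m₁ - 1 ≤ (k : ℕ)), x k) = 1 := by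
    rw [← S8.sum_split m₁ x]; exact hx1
  have e1 : ∑ k ∈ univ.filter (fun i : Fin m => (i:ℕ) < m₁ - 1), x k * (Mn - uL k jn)
      = (∑ k ∈ univ.filter (fun i : Fin m => (i:ℕ) < m₁ - 1), x k) * Mn
        - ∑ k ∈ univ.filter (fun i : Fin m => (i:ℕ) < m₁ - 1), x k * uL k jn := by
    rw [Finset.sum_mul, ← Finset.sum_sub_distrib]
    exact Finset.sum_congr rfl fun k _ => by ring
  rw [e1]
  linear_combination Mn * hsum

/-- On the facet Γ_i (i low), all low coordinates other than i vanish. -/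
lemma S8.gammaZero (m₁ : ℕ) {i : Fin m} (hi : (i : ℕ) < m₁ - 1)
    {y : Fin m → ℝ} (hy : y ∈ GammaSet m₁ i) :
    ∀ k : Fin m, (k : ℕ) < m₁ - 1 → k ≠ i → y k = 0 := by
  obtain ⟨⟨hy0, hy1⟩, hyG⟩ := hy
  have hiL : i ∈ univ.filter (fun i : Fin m => (i:ℕ) < m₁ - 1) :=
    Finset.mem_filter.2 ⟨Finset.mem_univ _, hi⟩
  have hsum : (∑ k ∈ univ.filter (fun i : Fin m => (i:ℕ) < m₁ - 1), y k)
      + (∑ k ∈ univ.filter (fun k : Fin m => m₁ - 1 ≤ (k : ℕ)), y k) = 1 := by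
    rw [← S8.sum_split m₁ y]; exact hy1
  have hLsum : ∑ k ∈ univ.filter (fun i : Fin m => (i:ℕ) < m₁ - 1), y k = y i := by
    linarith [hyG]
  have herase : ∑ k ∈ (univ.filter (fun i : Fin m => (i:ℕ) < m₁ - 1)).erase i, y k = 0 := by
    rw [Finset.sum_erase_eq_sub hiL, hLsum, sub_self]
  intro k hk hki
  exact (Finset.sum_eq_zero_iff_of_nonneg (fun j _ => hy0 j)).1 herase k
    (Finset.mem_erase.2 ⟨hki, Finset.mem_filter.2 ⟨Finset.mem_univ _, hk⟩⟩)

/-- Leader payoff on Γ_i. -/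
lemma S8.gammaPay (m₁ : ℕ) (uL : Fin m → Fin n → ℝ) (jn : Fin n) {Mn : ℝ}
    (hhigh : ∀ i : Fin m, m₁ - 1 ≤ (i : ℕ) → uL i jn = Mn)
    {i : Fin m} (hi : (i : ℕ) < m₁ - 1)
    {y : Fin m → ℝ} (hy : y ∈ GammaSet m₁ i) :
    pay uL y jn = Mn - y i * (Mn - uL i jn) := by
  have hiL : i ∈ univ.filter (fun i : Fin m => (i:ℕ) < m₁ - 1) :=
    Finset.mem_filter.2 ⟨Finset.mem_univ _, hi⟩
  rw [S8.payB m₁ uL jn hhigh y hy.1]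
  congr 1
  refine Finset.sum_eq_single_of_mem i hiL fun k hk hki => ?_
  rw [S8.gammaZero m₁ hi hy k (Finset.mem_filter.1 hk).2 hki, zero_mul]

end S8aux2

/-- for g with strictly positive coordinates and any choice of the critical
points x^i ∈ argmin_{x ∈ Γ_i ∩ f_g^{-1}(n)} x_i, the leader's best payoff over f_g^{-1}(n)
is attained at one of the critical points:
max_{x ∈ f_g^{-1}(n)} u^L(x,n) = max_{i ∈ [m₁−1]} u^L(x^i,n). -/
theorem best_in_finv_attained_at_critical {m n : ℕ}
    (uL : Fin m → Fin n → ℝ) (jn : Fin n)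
    (m₁ : ℕ) (hm₁ : 1 < m₁) (hm₁m : m₁ ≤ m)
    (Mn : ℝ)
    (hhigh : ∀ i : Fin m, m₁ - 1 ≤ (i : ℕ) → uL i jn = Mn)
    (hlow : ∀ i : Fin m, (i : ℕ) < m₁ - 1 → uL i jn < Mn)
    (μ : Fin m → Fin n → ℝ) (hμ : IsProperCover uL μ {jn})
    (g : Fin m → ℝ) (hg : ∀ i : Fin m, (i : ℕ) < m₁ - 1 → 0 < g i)
    (xs : Fin m → Fin m → ℝ)
    (hxs : ∀ i : Fin m, (i : ℕ) < m₁ - 1 →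
      xs i ∈ GammaSet m₁ i ∩ finv m₁ μ jn g ∧
        ∀ x ∈ GammaSet m₁ i ∩ finv m₁ μ jn g, xs i i ≤ x i) :
    sSup ((fun x => pay uL x jn) '' finv m₁ μ jn g) =
      sSup {v : ℝ | ∃ i : Fin m, (i : ℕ) < m₁ - 1 ∧ v = pay uL (xs i) jn} := by
  classical
  have hm0 : 0 < m := by omega
  set i0 : Fin m := ⟨0, hm0⟩ with hi0def
  have hi0 : (i0 : ℕ) < m₁ - 1 := by simp [hi0def]; omega
  have key : ∀ x ∈ finv m₁ μ jn g, ∃ i : Fin m, (i : ℕ) < m₁ - 1 ∧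
      pay uL x jn ≤ pay uL (xs i) jn := by
    intro x hx
    have hxS : x ∈ simplex m := hx.1
    have hxBR : ∀ j', pay (tuFg m₁ μ jn g) x j' ≤ pay (tuFg m₁ μ jn g) x jn := hx.2
    have hx0 : ∀ i, 0 ≤ x i := hxS.1
    have hx1 : ∑ i, x i = 1 := hxS.2
    have hsum : (∑ k ∈ univ.filter (fun i : Fin m => (i:ℕ) < m₁ - 1), x k)
        + (∑ k ∈ univ.filter (fun k : Fin m => m₁ - 1 ≤ (k : ℕ)), x k) = 1 := by
      rw [← S8.sum_split m₁ x]; exact hx1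
    suffices h : ∃ i : Fin m, (i : ℕ) < m₁ - 1 ∧
        xs i i * (Mn - uL i jn)
          ≤ ∑ k ∈ univ.filter (fun i : Fin m => (i:ℕ) < m₁ - 1), x k * (Mn - uL k jn) by
      obtain ⟨i, hi, hle⟩ := h
      refine ⟨i, hi, ?_⟩
      rw [S8.payB m₁ uL jn hhigh x hxS, S8.gammaPay m₁ uL jn hhigh hi (hxs i hi).1.1]
      linarith
    have ht0 : 0 ≤ ∑ k ∈ univ.filter (fun k : Fin m => m₁ - 1 ≤ (k : ℕ)), x k :=
      Finset.sum_nonneg fun k _ => hx0 k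
    rcases eq_or_lt_of_le ht0 with ht | ht
    · -- t = 0 case
      obtain ⟨i1, hi1L, hi1min⟩ := Finset.exists_min_image
        (univ.filter (fun i : Fin m => (i:ℕ) < m₁ - 1)) (fun k => Mn - uL k jn)
        ⟨i0, Finset.mem_filter.2 ⟨Finset.mem_univ _, hi0⟩⟩
      have hi1 : (i1 : ℕ) < m₁ - 1 := (Finset.mem_filter.1 hi1L).2
      refine ⟨i1, hi1, ?_⟩
      have hsone : ∑ k ∈ univ.filter (fun i : Fin m => (i:ℕ) < m₁ - 1), x k = 1 := by
        linarith
      have hB : Mn - uL i1 jn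
          ≤ ∑ k ∈ univ.filter (fun i : Fin m => (i:ℕ) < m₁ - 1), x k * (Mn - uL k jn) := by
        calc Mn - uL i1 jn
            = ∑ k ∈ univ.filter (fun i : Fin m => (i:ℕ) < m₁ - 1), x k * (Mn - uL i1 jn) := by
              rw [← Finset.sum_mul, hsone, one_mul]
          _ ≤ _ := Finset.sum_le_sum fun k hk =>
              mul_le_mul_of_nonneg_left (hi1min k hk) (hx0 k)
      have hb1 : 0 < Mn - uL i1 jn := by linarith [hlow i1 hi1]
      have hxsS : xs i1 ∈ simplex m := (hxs i1 hi1).1.1.1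
      have hw1 : xs i1 i1 ≤ 1 := by
        have h1 := Finset.single_le_sum (f := xs i1) (fun k _ => hxsS.1 k) (Finset.mem_univ i1)
        rw [hxsS.2] at h1; exact h1
      have hchain := mul_le_mul_of_nonneg_right hw1 hb1.le
      rw [one_mul] at hchain
      linarith
    · -- t > 0 case
      have hn2 : 1 < n := by
        by_contra hle
        push_neg at hle
        have hxs0 : xs i0 ∈ simplex m := (hxs i0 hi0).1.2.1
        refine hμ.2 (xs i0) hxs0 jn rfl ?_
        show ∀ j' : Fin n, pay μ (xs i0) j' ≤ pay μ (xs i0) jn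
        intro j'
        have h1 := j'.isLt
        have h2 := jn.isLt
        have hj : j' = jn := Fin.ext (by omega)
        rw [hj]
      have herase : (univ.erase jn).Nonempty := by
        rw [← Finset.card_pos, Finset.card_erase_of_mem (Finset.mem_univ _),
          Finset.card_univ, Fintype.card_fin]
        omega
      obtain ⟨js, hjs, hjsmax⟩ := Finset.exists_max_image (univ.erase jn)
        (fun j => ∑ k ∈ univ.filter (fun k : Fin m => m₁ - 1 ≤ (k : ℕ)), x k * μ k j) herase
      have hjsne : js ≠ jn := (Finset.mem_erase.1 hjs).1
      set t := ∑ k ∈ univ.filter (fun k : Fin m => m₁ - 1 ≤ (k : ℕ)), x k with htdef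
      set q := ∑ k ∈ univ.filter (fun k : Fin m => m₁ - 1 ≤ (k : ℕ)), x k * μ k js with hqdef
      set D := (q - Wmin μ * t) / t with hDdef
      have ht' : t ≠ 0 := ne_of_gt ht
      have hDt : t * D = q - Wmin μ * t := by
        rw [hDdef]; field_simp
      have hq1 : (Wmin μ + 1) * t ≤ q := by
        have h1 : ∀ k ∈ univ.filter (fun k : Fin m => m₁ - 1 ≤ (k : ℕ)),
            x k * (Wmin μ + 1) ≤ x k * μ k js :=
          fun k _ => mul_le_mul_of_nonneg_left (S8.Wmin_le μ k js) (hx0 k)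
        have h2 := Finset.sum_le_sum h1
        rw [← Finset.sum_mul] at h2
        rw [← htdef, ← hqdef] at h2
        linarith
      have hD1 : 1 ≤ D := by
        rw [hDdef, le_div_iff₀ ht]; linarith
      have hD0 : (0:ℝ) < D := lt_of_lt_of_le one_pos hD1
      have hG : t * D ≤ ∑ i ∈ univ.filter (fun i : Fin m => (i:ℕ) < m₁ - 1), x i * g i := by
        have h2 := hxBR js
        rw [S8.pay_tuFg_ne m₁ μ jn g x hjsne, S8.pay_tuFg_jn m₁ μ jn g x] at h2
        rw [← htdef, ← hqdef] at h2
        linarith [hDt]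
      have hs : 0 < ∑ k ∈ univ.filter (fun i : Fin m => (i:ℕ) < m₁ - 1), x k := by
        by_contra hsn
        have hs0 : ∑ k ∈ univ.filter (fun i : Fin m => (i:ℕ) < m₁ - 1), x k = 0 :=
          le_antisymm (not_lt.1 hsn) (Finset.sum_nonneg fun k _ => hx0 k)
        have hzero : ∀ k ∈ univ.filter (fun i : Fin m => (i:ℕ) < m₁ - 1), x k = 0 :=
          (Finset.sum_eq_zero_iff_of_nonneg (fun k _ => hx0 k)).1 hs0
        have hG0 : ∑ i ∈ univ.filter (fun i : Fin m => (i:ℕ) < m₁ - 1), x i * g i = 0 :=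
          Finset.sum_eq_zero fun k hk => by rw [hzero k hk, zero_mul]
        nlinarith [hG, hD1, ht]
      have hs' : ∑ k ∈ univ.filter (fun i : Fin m => (i:ℕ) < m₁ - 1), (0:ℝ)
          < ∑ k ∈ univ.filter (fun i : Fin m => (i:ℕ) < m₁ - 1), x k := by
        simpa using hs
      obtain ⟨ip, hipL, hip⟩ := Finset.exists_lt_of_sum_lt hs'
      have hipl : (ip : ℕ) < m₁ - 1 := (Finset.mem_filter.1 hipL).2
      -- bound the critical coordinates via explicit witnesses in Γ_i ∩ finv
      have hzbound : ∀ i : Fin m, (i : ℕ) < m₁ - 1 → xs i i ≤ D / (g i + D) := by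
        intro i hi
        have hgi := hg i hi
        have hgD : (0:ℝ) < g i + D := by linarith
        set θ : ℝ := g i / (g i + D) with hθdef
        have hθ0 : 0 ≤ θ := le_of_lt (div_pos hgi hgD)
        have hθle : θ ≤ 1 := by rw [hθdef, div_le_one hgD]; linarith
        have hθ1 : 1 - θ = D / (g i + D) := by
          rw [hθdef]; field_simp; ring
        set z : Fin m → ℝ := fun k =>
          (if k = i then 1 - θ else 0) + (if m₁ - 1 ≤ (k : ℕ) then θ * x k / t else 0)
          with hzdef
        have hiH : ¬ (m₁ - 1 ≤ (i : ℕ)) := Nat.not_le.mpr hi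
        have hz_i : z i = 1 - θ := by
          simp only [hzdef]
          rw [if_neg hiH, add_zero]
          simp
        have hzL : ∀ k : Fin m, k ≠ i → ¬ (m₁ - 1 ≤ (k : ℕ)) → z k = 0 := by
          intro k hki hk
          simp only [hzdef]
          rw [if_neg hki, if_neg hk, add_zero]
        have hzH : ∀ k : Fin m, m₁ - 1 ≤ (k : ℕ) → z k = θ / t * x k := by
          intro k hk
          have hki : k ≠ i := by rintro rfl; omega
          simp only [hzdef]
          rw [if_neg hki, if_pos hk, zero_add]
          ring
        have hiL : i ∈ univ.filter (fun i : Fin m => (i:ℕ) < m₁ - 1) :=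
          Finset.mem_filter.2 ⟨Finset.mem_univ _, hi⟩
        have hLz : ∑ k ∈ univ.filter (fun i : Fin m => (i:ℕ) < m₁ - 1), z k = 1 - θ := by
          rw [Finset.sum_eq_single_of_mem i hiL fun k hk hki =>
            hzL k hki (Nat.not_le.mpr (Finset.mem_filter.1 hk).2)]
          exact hz_i
        have hHz : ∑ k ∈ univ.filter (fun k : Fin m => m₁ - 1 ≤ (k : ℕ)), z k = θ := by
          rw [Finset.sum_congr rfl fun k hk => hzH k (Finset.mem_filter.1 hk).2,
            ← Finset.mul_sum, ← htdef]
          exact div_mul_cancel₀ θ ht'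
        have hzS : z ∈ simplex m := by
          constructor
          · intro k
            have h1 : (0:ℝ) ≤ if k = i then 1 - θ else 0 := by
              split
              · linarith
              · exact le_rfl
            have h2 : (0:ℝ) ≤ if m₁ - 1 ≤ (k : ℕ) then θ * x k / t else 0 := by
              split
              · exact div_nonneg (mul_nonneg hθ0 (hx0 k)) ht.le
              · exact le_rfl
            show (0:ℝ) ≤ z k
            rw [hzdef]
            exact add_nonneg h1 h2
          · rw [S8.sum_split m₁ z, hLz, hHz]; ring
        have hzG : z ∈ GammaSet m₁ i := ⟨hzS, by rw [hz_i, hHz]; ring⟩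
        have hzF : z ∈ finv m₁ μ jn g := by
          refine ⟨hzS, ?_⟩
          show ∀ j', pay (tuFg m₁ μ jn g) z j' ≤ pay (tuFg m₁ μ jn g) z jn
          intro j'
          rcases eq_or_ne j' jn with rfl | hne
          · exact le_rfl
          · rw [S8.pay_tuFg_ne m₁ μ jn g z hne, S8.pay_tuFg_jn m₁ μ jn g z]
            have h3 : ∑ k ∈ univ.filter (fun i : Fin m => (i:ℕ) < m₁ - 1), z k * g k
                = (1 - θ) * g i := by
              rw [Finset.sum_eq_single_of_mem i hiL (fun k hk hki => by
                rw [hzL k hki (Nat.not_le.mpr (Finset.mem_filter.1 hk).2), zero_mul]), hz_i]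
            have h1 : ∑ k ∈ univ.filter (fun k : Fin m => m₁ - 1 ≤ (k : ℕ)), z k * μ k j'
                = θ / t * ∑ k ∈ univ.filter (fun k : Fin m => m₁ - 1 ≤ (k : ℕ)), x k * μ k j' := by
              rw [Finset.mul_sum]
              refine Finset.sum_congr rfl fun k hk => ?_
              rw [hzH k (Finset.mem_filter.1 hk).2]; ring
            have h2 : ∑ k ∈ univ.filter (fun k : Fin m => m₁ - 1 ≤ (k : ℕ)), x k * μ k j' ≤ q :=
              hjsmax j' (Finset.mem_erase.2 ⟨hne, Finset.mem_univ _⟩)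
            rw [h1, h3, hHz]
            have hq2 : q = t * (D + Wmin μ) := by linear_combination -hDt
            have hθD : θ * D = (1 - θ) * g i := by rw [hθ1, hθdef]; ring
            calc θ / t * ∑ k ∈ univ.filter (fun k : Fin m => m₁ - 1 ≤ (k : ℕ)), x k * μ k j'
                ≤ θ / t * q := mul_le_mul_of_nonneg_left h2 (div_nonneg hθ0 ht.le)
              _ = θ * D + θ * Wmin μ := by
                  rw [hq2]; field_simp
              _ = (1 - θ) * g i + θ * Wmin μ := by rw [hθD]
        have hmin := (hxs i hi).2 z ⟨hzG, hzF⟩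
        rw [hz_i] at hmin
        rw [hθ1] at hmin
        exact hmin
      -- contradiction argument
      by_contra hcon
      push_neg at hcon
      set B := ∑ k ∈ univ.filter (fun i : Fin m => (i:ℕ) < m₁ - 1), x k * (Mn - uL k jn)
        with hBdef
      have h3all : ∀ k ∈ univ.filter (fun i : Fin m => (i:ℕ) < m₁ - 1),
          B * (g k + D) < (Mn - uL k jn) * D := by
        intro k hk
        have hkl := (Finset.mem_filter.1 hk).2
        have hbk : 0 < Mn - uL k jn := by linarith [hlow k hkl]
        have hgD : (0:ℝ) < g k + D := by linarith [hg k hkl]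
        have h1 : B < xs k k * (Mn - uL k jn) := hcon k hkl
        have h2 : xs k k * (Mn - uL k jn) ≤ D / (g k + D) * (Mn - uL k jn) :=
          mul_le_mul_of_nonneg_right (hzbound k hkl) hbk.le
        have h3 : B < D / (g k + D) * (Mn - uL k jn) := lt_of_lt_of_le h1 h2
        rw [div_mul_eq_mul_div, lt_div_iff₀ hgD] at h3
        exact h3.trans_eq (mul_comm _ _)
      have hstep : ∀ k ∈ univ.filter (fun i : Fin m => (i:ℕ) < m₁ - 1),
          x k * (B * (g k + D)) ≤ x k * ((Mn - uL k jn) * D) :=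
        fun k hk => mul_le_mul_of_nonneg_left (h3all k hk).le (hx0 k)
      have hstrict : x ip * (B * (g ip + D)) < x ip * ((Mn - uL ip jn) * D) :=
        (mul_lt_mul_iff_right₀ hip).2 (h3all ip hipL)
      have hsum_lt := Finset.sum_lt_sum hstep ⟨ip, hipL, hstrict⟩
      have e2 : ∑ k ∈ univ.filter (fun i : Fin m => (i:ℕ) < m₁ - 1), x k * (B * (g k + D))
          = B * (∑ k ∈ univ.filter (fun i : Fin m => (i:ℕ) < m₁ - 1), x k * g k)
            + B * D * (∑ k ∈ univ.filter (fun i : Fin m => (i:ℕ) < m₁ - 1), x k) := by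
        rw [Finset.mul_sum, Finset.mul_sum, ← Finset.sum_add_distrib]
        exact Finset.sum_congr rfl fun k _ => by ring
      have e3 : ∑ k ∈ univ.filter (fun i : Fin m => (i:ℕ) < m₁ - 1), x k * ((Mn - uL k jn) * D)
          = B * D := by
        rw [Finset.sum_congr rfl (fun k _ => (mul_assoc (x k) _ _).symm), ← Finset.sum_mul,
          ← hBdef]
      have hB0 : 0 < B := by
        have h1 : x ip * (Mn - uL ip jn) ≤ B := by
          rw [hBdef]
          exact Finset.single_le_sum (f := fun k => x k * (Mn - uL k jn))
            (fun k hk => mul_nonneg (hx0 k)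
              (by linarith [hlow k (Finset.mem_filter.1 hk).2])) hipL
        nlinarith [hlow ip hipl, hip]
      have h4 : B * (t * D)
          ≤ B * (∑ k ∈ univ.filter (fun i : Fin m => (i:ℕ) < m₁ - 1), x k * g k) :=
        mul_le_mul_of_nonneg_left hG hB0.le
      have h5 : B * (t * D) + B * D * (∑ k ∈ univ.filter (fun i : Fin m => (i:ℕ) < m₁ - 1), x k)
          < B * D := by
        rw [e2, e3] at hsum_lt
        linarith
      have h6 : B * (t * D) + B * D * (∑ k ∈ univ.filter (fun i : Fin m => (i:ℕ) < m₁ - 1), x k)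
          = B * D := by
        linear_combination (B * D) * hsum
      linarith
  have hRfin : {v : ℝ | ∃ i : Fin m, (i : ℕ) < m₁ - 1 ∧ v = pay uL (xs i) jn}.Finite := by
    have hsub : {v : ℝ | ∃ i : Fin m, (i : ℕ) < m₁ - 1 ∧ v = pay uL (xs i) jn}
        ⊆ (fun i : Fin m => pay uL (xs i) jn) '' Set.univ := by
      rintro v ⟨i, hi, rfl⟩; exact ⟨i, trivial, rfl⟩
    exact (Set.finite_univ.image _).subset hsub
  have hRbdd : BddAbove {v : ℝ | ∃ i : Fin m, (i : ℕ) < m₁ - 1 ∧ v = pay uL (xs i) jn} :=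
    hRfin.bddAbove
  have hRne : {v : ℝ | ∃ i : Fin m, (i : ℕ) < m₁ - 1 ∧ v = pay uL (xs i) jn}.Nonempty :=
    ⟨pay uL (xs i0) jn, i0, hi0, rfl⟩
  have hAne : ((fun x => pay uL x jn) '' finv m₁ μ jn g).Nonempty :=
    ⟨pay uL (xs i0) jn, xs i0, (hxs i0 hi0).1.2, rfl⟩
  have hAle : ∀ v ∈ (fun x => pay uL x jn) '' finv m₁ μ jn g,
      v ≤ sSup {v : ℝ | ∃ i : Fin m, (i : ℕ) < m₁ - 1 ∧ v = pay uL (xs i) jn} := by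
    rintro v ⟨x, hx, rfl⟩
    obtain ⟨i, hiL, hle⟩ := key x hx
    exact hle.trans (le_csSup hRbdd ⟨i, hiL, rfl⟩)
  have hAbdd : BddAbove ((fun x => pay uL x jn) '' finv m₁ μ jn g) :=
    ⟨_, hAle⟩
  apply le_antisymm
  · exact csSup_le hAne hAle
  · refine csSup_le hRne ?_
    rintro v ⟨i, hiL, rfl⟩
    exact le_csSup hAbdd ⟨xs i, (hxs i hiL).1.2, rfl⟩
end
end

section
/- With the construction of ũ_g^F below, define, for g ∈ ℝ^{m₁−1} with all coordinates strictly positive, I_g = { i ∈ [m₁−1] : (x^i, n) is a strong Stackelberg equilibrium of (u^L, ũ_g^F) }, where x^i ∈ argmin_{x ∈ Γ_i ∩ f_g^{-1}(n)} x_i (this set is independent of the choice of x^i). If I_g ≠ ∅ and i ∈ [m₁−1] \ I_g, then there exists g* > 0 such that, letting g' be g with its i-th coordinate replaced by g*, one has I_{g'} = I_g ∪ {i}. -/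
open scoped Classical
open Finset

noncomputable section

-- auxiliary lemmas

def Lf (m m₁ : ℕ) : Finset (Fin m) := Finset.univ.filter (fun k => (k:ℕ) < m₁ - 1)
def Hf (m m₁ : ℕ) : Finset (Fin m) := Finset.univ.filter (fun k => ¬ (k:ℕ) < m₁ - 1)

lemma Hf_eq (m m₁ : ℕ) :
    (Finset.univ.filter (fun k : Fin m => m₁ - 1 ≤ (k : ℕ))) = Hf m m₁ := by
  apply Finset.filter_congr; intro k _; constructor <;> (intro; omega)

lemma sum_split (m m₁ : ℕ) (f : Fin m → ℝ) :
    ∑ k, f k = ∑ k ∈ Lf m m₁, f k + ∑ k ∈ Hf m m₁, f k :=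
  (Finset.sum_filter_add_sum_filter_not Finset.univ _ f).symm

lemma Wlb {m n : ℕ} (μ : Fin m → Fin n → ℝ) (k : Fin m) (j : Fin n) :
    Wmin μ + 1 ≤ μ k j := by
  have h : sInf (Set.range fun p : Fin m × Fin n => μ p.1 p.2) ≤ μ k j :=
    csInf_le (Set.Finite.bddBelow (Set.finite_range _)) ⟨(k, j), rfl⟩
  unfold Wmin; linarith

lemma payA {m n : ℕ} (m₁ : ℕ) (μ : Fin m → Fin n → ℝ) (jn : Fin n) (γ : Fin m → ℝ)
    (x : Fin m → ℝ) :
    pay (tuFg m₁ μ jn γ) x jn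
      = (∑ k ∈ Lf m m₁, x k * γ k) + (∑ k ∈ Hf m m₁, x k) * Wmin μ := by
  unfold pay
  rw [sum_split m m₁, Finset.sum_mul]
  congr 1
  · refine Finset.sum_congr rfl fun k hk => ?_
    simp only [Lf, Finset.mem_filter] at hk
    simp [tuFg, hk.2]
  · refine Finset.sum_congr rfl fun k hk => ?_
    simp only [Hf, Finset.mem_filter] at hk
    simp [tuFg, hk.2]

lemma payB {m n : ℕ} (m₁ : ℕ) (μ : Fin m → Fin n → ℝ) (jn : Fin n) (γ : Fin m → ℝ)
    (x : Fin m → ℝ) (j : Fin n) (hj : j ≠ jn) :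
    pay (tuFg m₁ μ jn γ) x j = ∑ k ∈ Hf m m₁, x k * μ k j := by
  unfold pay
  rw [sum_split m m₁]
  have h1 : ∑ k ∈ Lf m m₁, x k * tuFg m₁ μ jn γ k j = 0 := by
    refine Finset.sum_eq_zero fun k hk => ?_
    simp only [Lf, Finset.mem_filter] at hk
    simp [tuFg, hk.2, hj]
  rw [h1, zero_add]
  refine Finset.sum_congr rfl fun k hk => ?_
  simp only [Hf, Finset.mem_filter] at hk
  simp [tuFg, hk.2, hj]

lemma payuL {m n : ℕ} (m₁ : ℕ) (uL : Fin m → Fin n → ℝ) (jn : Fin n) (Mn : ℝ)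
    (hhigh : ∀ i : Fin m, m₁ - 1 ≤ (i : ℕ) → uL i jn = Mn)
    (x : Fin m → ℝ) (hx : ∑ k, x k = 1) :
    pay uL x jn = Mn - ∑ k ∈ Lf m m₁, x k * (Mn - uL k jn) := by
  have h1 : ∑ k, x k * (Mn - uL k jn) = ∑ k ∈ Lf m m₁, x k * (Mn - uL k jn) := by
    rw [sum_split m m₁ (fun k => x k * (Mn - uL k jn))]
    have h2 : ∑ k ∈ Hf m m₁, x k * (Mn - uL k jn) = 0 := by
      refine Finset.sum_eq_zero fun k hk => ?_
      simp only [Hf, Finset.mem_filter] at hk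
      rw [hhigh k (by omega)]; ring
    rw [h2, add_zero]
  have h3 : ∑ k, x k * (Mn - uL k jn) = Mn - pay uL x jn := by
    unfold pay
    simp only [mul_sub]
    rw [Finset.sum_sub_distrib, ← Finset.sum_mul, hx, one_mul]
  linarith [h1 ▸ h3]
lemma simplex_mem {m : ℕ} {x : Fin m → ℝ} (hx : x ∈ simplex m) :
    (∀ k, 0 ≤ x k) ∧ ∑ k, x k = 1 := hx

lemma gamma_low_zero {m : ℕ} {m₁ : ℕ} {i' : Fin m} (hi' : (i' : ℕ) < m₁ - 1)
    {x : Fin m → ℝ} (hx : x ∈ GammaSet m₁ i') :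
    ∀ k : Fin m, (k : ℕ) < m₁ - 1 → k ≠ i' → x k = 0 := by
  have hnn := (simplex_mem hx.1).1
  have hsum := (simplex_mem hx.1).2
  have hΓ : 1 - x i' = ∑ k ∈ Hf m m₁, x k := by rw [← Hf_eq]; exact hx.2
  have hsplit := sum_split m m₁ x
  have hi'mem : i' ∈ Lf m m₁ := by simp [Lf, hi']
  have hL : ∑ k ∈ (Lf m m₁).erase i', x k = 0 := by
    have := Finset.sum_erase_add (Lf m m₁) x hi'mem
    linarith
  intro k hk hki'
  have hkmem : k ∈ (Lf m m₁).erase i' := by simp [Lf, hk, hki']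
  exact (Finset.sum_eq_zero_iff_of_nonneg (fun k _ => hnn k)).1 hL k hkmem

lemma gamma_lowsum {m : ℕ} {m₁ : ℕ} {i' : Fin m} (hi' : (i' : ℕ) < m₁ - 1)
    {x : Fin m → ℝ} (hx : x ∈ GammaSet m₁ i') :
    ∑ k ∈ Lf m m₁, x k * 1 = x i' * 1 := by
  refine Finset.sum_eq_single i' (fun k hk hki' => ?_) (fun h => absurd (by simp [Lf, hi'] : i' ∈ Lf m m₁) h)
  simp only [Lf, Finset.mem_filter] at hk
  rw [gamma_low_zero hi' hx k hk.2 hki']; ring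

lemma gamma_pay {m n : ℕ} {m₁ : ℕ} (uL : Fin m → Fin n → ℝ) (jn : Fin n) (Mn : ℝ)
    (hhigh : ∀ i : Fin m, m₁ - 1 ≤ (i : ℕ) → uL i jn = Mn)
    {i' : Fin m} (hi' : (i' : ℕ) < m₁ - 1)
    {x : Fin m → ℝ} (hx : x ∈ GammaSet m₁ i') :
    pay uL x jn = Mn - x i' * (Mn - uL i' jn) := by
  rw [payuL m₁ uL jn Mn hhigh x (simplex_mem hx.1).2]
  congr 1
  refine Finset.sum_eq_single i' (fun k hk hki' => ?_) (fun h => absurd (by simp [Lf, hi'] : i' ∈ Lf m m₁) h)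
  simp only [Lf, Finset.mem_filter] at hk
  rw [gamma_low_zero hi' hx k hk.2 hki']; ring

lemma pay_update_eq {m n : ℕ} (m₁ : ℕ) (μ : Fin m → Fin n → ℝ) (jn : Fin n)
    (g : Fin m → ℝ) (i : Fin m) (γ : ℝ) {x : Fin m → ℝ} (hxi : x i = 0) (j : Fin n) :
    pay (tuFg m₁ μ jn (Function.update g i γ)) x j = pay (tuFg m₁ μ jn g) x j := by
  unfold pay
  refine Finset.sum_congr rfl fun k _ => ?_
  by_cases hk : k = i
  · subst hk; rw [hxi]; ring
  · unfold tuFg; rw [Function.update_of_ne hk]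

lemma gamma_finv_update {m n : ℕ} (m₁ : ℕ) (μ : Fin m → Fin n → ℝ) (jn : Fin n)
    (g : Fin m → ℝ) {i i' : Fin m} (hi : (i : ℕ) < m₁ - 1) (hi' : (i' : ℕ) < m₁ - 1)
    (hne : i ≠ i') (γ : ℝ) :
    GammaSet m₁ i' ∩ finv m₁ μ jn (Function.update g i γ)
      = GammaSet m₁ i' ∩ finv m₁ μ jn g := by
  ext x
  simp only [Set.mem_inter_iff, and_congr_right_iff]
  intro hxΓ
  have hxi : x i = 0 := gamma_low_zero hi' hxΓ i hi hne
  constructor <;> intro hxf <;> refine ⟨hxf.1, fun j' => ?_⟩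
  · have := hxf.2 j'
    rwa [pay_update_eq m₁ μ jn g i γ hxi j', pay_update_eq m₁ μ jn g i γ hxi jn] at this
  · have := hxf.2 j'
    rwa [← pay_update_eq m₁ μ jn g i γ hxi j', ← pay_update_eq m₁ μ jn g i γ hxi jn] at this

lemma lowpos {m n : ℕ} {m₁ : ℕ} {μ : Fin m → Fin n → ℝ} {jn : Fin n}
    (hj1 : ∃ j1 : Fin n, j1 ≠ jn) (γv : Fin m → ℝ) {x : Fin m → ℝ}
    (hx : x ∈ finv m₁ μ jn γv) (hL : ∑ k ∈ Lf m m₁, x k = 0) : False := by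
  obtain ⟨j1, hj1⟩ := hj1
  have hnn := (simplex_mem hx.1).1
  have hsum := (simplex_mem hx.1).2
  have hH : ∑ k ∈ Hf m m₁, x k = 1 := by
    have := sum_split m m₁ x; linarith
  have hzero : ∀ k ∈ Lf m m₁, x k = 0 :=
    (Finset.sum_eq_zero_iff_of_nonneg (fun k _ => hnn k)).1 hL
  have hBR := hx.2 j1
  rw [payB m₁ μ jn γv x j1 hj1, payA m₁ μ jn γv x] at hBR
  have h1 : ∑ k ∈ Lf m m₁, x k * γv k = 0 :=
    Finset.sum_eq_zero fun k hk => by rw [hzero k hk]; ring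
  have h2 : (∑ k ∈ Hf m m₁, x k) * (Wmin μ + 1) ≤ ∑ k ∈ Hf m m₁, x k * μ k j1 := by
    rw [Finset.sum_mul]
    exact Finset.sum_le_sum fun k _ => mul_le_mul_of_nonneg_left (Wlb μ k j1) (hnn k)
  rw [hH] at h2 hBR
  rw [h1] at hBR
  linarith
lemma Zmem {m n : ℕ} {m₁ : ℕ} (μ : Fin m → Fin n → ℝ) (jn : Fin n)
    (γv : Fin m → ℝ) {k0 : Fin m} (hk0 : (k0 : ℕ) < m₁ - 1) (hγ : 0 < γv k0)
    (h : Fin m → ℝ) (hh0 : ∀ k, 0 ≤ h k) (hlow : ∀ k : Fin m, (k : ℕ) < m₁ - 1 → h k = 0)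
    (S : ℝ) (hS : ∑ k, h k = S) (hSpos : 0 < S)
    (Q : ℝ) (hQpos : 0 < Q)
    (hQ : ∀ j, j ≠ jn → ∑ k, h k * μ k j ≤ (Q + Wmin μ) * S) :
    ∃ z : Fin m → ℝ, z ∈ GammaSet m₁ k0 ∩ finv m₁ μ jn γv ∧ z k0 = Q / (γv k0 + Q) := by
  set t : ℝ := Q / (γv k0 + Q) with hdeft
  have hγQ : 0 < γv k0 + Q := by linarith
  have ht0 : 0 < t := div_pos hQpos hγQ
  have ht1 : t < 1 := by
    rw [hdeft, div_lt_one hγQ]; linarith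
  have htQ : t * (γv k0 + Q) = Q := div_mul_cancel₀ Q (ne_of_gt hγQ)
  set ρ : ℝ := (1 - t) / S with hdefρ
  have hρ : 0 ≤ ρ := div_nonneg (by linarith) (le_of_lt hSpos)
  have hρS : ρ * S = 1 - t := div_mul_cancel₀ _ (ne_of_gt hSpos)
  set z : Fin m → ℝ := fun k => if k = k0 then t else ρ * h k with hdefz
  have hzk0 : z k0 = t := by simp [hdefz]
  have hsumHfh : ∑ k ∈ Hf m m₁, h k = S := by
    have h1 : ∑ k ∈ Lf m m₁, h k = 0 := Finset.sum_eq_zero fun k hk => by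
      simp only [Lf, Finset.mem_filter] at hk; exact hlow k hk.2
    have := sum_split m m₁ h; linarith
  have hzHf : ∀ k ∈ Hf m m₁, z k = ρ * h k := by
    intro k hk
    simp only [Hf, Finset.mem_filter] at hk
    have : k ≠ k0 := fun he => hk.2 (he ▸ hk0)
    simp [hdefz, this]
  have hsumHfz : ∑ k ∈ Hf m m₁, z k = 1 - t := by
    rw [Finset.sum_congr rfl hzHf, ← Finset.mul_sum, hsumHfh, hρS]
  have hzsum : ∑ k, z k = 1 := by
    have h1 : ∑ k ∈ Lf m m₁, z k = t := by
      have h0 : ∑ k ∈ Lf m m₁, z k = z k0 := by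
        refine Finset.sum_eq_single k0 (fun k hk hkne => ?_)
          (fun hc => absurd (by simp [Lf, hk0] : k0 ∈ Lf m m₁) hc)
        simp only [Lf, Finset.mem_filter] at hk
        simp [hdefz, hkne, hlow k hk.2]
      rw [h0, hzk0]
    have := sum_split m m₁ z; rw [h1, hsumHfz] at this; linarith
  have hznn : ∀ k, 0 ≤ z k := by
    intro k; by_cases hk : k = k0
    · subst hk; rw [hzk0]; exact le_of_lt ht0
    · simp only [hdefz, if_neg hk]; exact mul_nonneg hρ (hh0 k)
  have hzsimplex : z ∈ simplex m := ⟨hznn, hzsum⟩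
  have hzΓ : z ∈ GammaSet m₁ k0 := by
    refine ⟨hzsimplex, ?_⟩
    rw [Hf_eq, hsumHfz, hzk0]
  have hLfzγ : ∑ k ∈ Lf m m₁, z k * γv k = t * γv k0 := by
    have h0 : ∑ k ∈ Lf m m₁, z k * γv k = z k0 * γv k0 := by
      refine Finset.sum_eq_single k0 (fun k hk hkne => ?_)
        (fun hc => absurd (by simp [Lf, hk0] : k0 ∈ Lf m m₁) hc)
      simp only [Lf, Finset.mem_filter] at hk
      simp [hdefz, hkne, hlow k hk.2]
    rw [h0, hzk0]
  have hpayjn : pay (tuFg m₁ μ jn γv) z jn = t * γv k0 + (1 - t) * Wmin μ := by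
    rw [payA, hLfzγ, hsumHfz]
  have hzf : z ∈ finv m₁ μ jn γv := by
    refine ⟨hzsimplex, fun j' => ?_⟩
    by_cases hj' : j' = jn
    · subst hj'; exact le_refl _
    · rw [payB m₁ μ jn γv z j' hj', hpayjn]
      have h2 : ∑ k ∈ Hf m m₁, z k * μ k j' = ρ * ∑ k ∈ Hf m m₁, h k * μ k j' := by
        rw [Finset.mul_sum]
        refine Finset.sum_congr rfl fun k hk => by rw [hzHf k hk]; ring
      have h3 : ∑ k ∈ Hf m m₁, h k * μ k j' = ∑ k, h k * μ k j' := by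
        have h4 : ∑ k ∈ Lf m m₁, h k * μ k j' = 0 := Finset.sum_eq_zero fun k hk => by
          simp only [Lf, Finset.mem_filter] at hk; rw [hlow k hk.2]; ring
        have := sum_split m m₁ (fun k => h k * μ k j'); linarith
      have h5 : ρ * ∑ k, h k * μ k j' ≤ ρ * ((Q + Wmin μ) * S) :=
        mul_le_mul_of_nonneg_left (hQ j' hj') hρ
      have h6 : ρ * ((Q + Wmin μ) * S) = (1 - t) * Q + (1 - t) * Wmin μ := by
        have : ρ * ((Q + Wmin μ) * S) = (ρ * S) * (Q + Wmin μ) := by ring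
        rw [this, hρS]; ring
      have h7 : (1 - t) * Q ≤ t * γv k0 := by nlinarith [htQ]
      rw [h2, h3]; linarith
  exact ⟨z, ⟨hzΓ, hzf⟩, hzk0⟩
set_option maxHeartbeats 3000000 in
/-- if I_g ≠ ∅ and i ∈ [m₁−1] \ I_g, then there is g* > 0 such that, letting
g' = g with its i-th coordinate replaced by g*, I_{g'} = I_g ∪ {i}
(for any choice of critical points, since I_g is independent of that choice). -/
theorem grow_Ig {m n : ℕ}
    (uL : Fin m → Fin n → ℝ) (jn : Fin n)
    (m₁ : ℕ) (hm₁ : 1 < m₁) (hm₁m : m₁ ≤ m)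
    (Mn : ℝ)
    (hhigh : ∀ i : Fin m, m₁ - 1 ≤ (i : ℕ) → uL i jn = Mn)
    (hlow : ∀ i : Fin m, (i : ℕ) < m₁ - 1 → uL i jn < Mn)
    (μ : Fin m → Fin n → ℝ) (hμ : IsProperCover uL μ {jn})
    (g : Fin m → ℝ) (hg : ∀ i : Fin m, (i : ℕ) < m₁ - 1 → 0 < g i)
    (xs : Fin m → Fin m → ℝ)
    (hxs : ∀ i : Fin m, (i : ℕ) < m₁ - 1 →
      xs i ∈ GammaSet m₁ i ∩ finv m₁ μ jn g ∧
        ∀ x ∈ GammaSet m₁ i ∩ finv m₁ μ jn g, xs i i ≤ x i)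
    (hIg : ({i : Fin m | (i : ℕ) < m₁ - 1 ∧
        SSE uL (tuFg m₁ μ jn g) (xs i) jn}).Nonempty)
    (i : Fin m) (hi : (i : ℕ) < m₁ - 1)
    (hiI : ¬ SSE uL (tuFg m₁ μ jn g) (xs i) jn) :
    ∃ gstar : ℝ, 0 < gstar ∧
      ∀ xs' : Fin m → Fin m → ℝ,
        (∀ i' : Fin m, (i' : ℕ) < m₁ - 1 →
          xs' i' ∈ GammaSet m₁ i' ∩ finv m₁ μ jn (Function.update g i gstar) ∧
            ∀ x ∈ GammaSet m₁ i' ∩ finv m₁ μ jn (Function.update g i gstar),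
              xs' i' i' ≤ x i') →
        {i' : Fin m | (i' : ℕ) < m₁ - 1 ∧
            SSE uL (tuFg m₁ μ jn (Function.update g i gstar)) (xs' i') jn} =
          {i' : Fin m | (i' : ℕ) < m₁ - 1 ∧
            SSE uL (tuFg m₁ μ jn g) (xs i') jn} ∪ {i} := by
  classical
  obtain ⟨i0, hi0low, hSSE0⟩ := hIg
  -- there is a follower action different from jn
  have hj1 : ∃ j1 : Fin n, j1 ≠ jn := by
    by_contra hc; push_neg at hc
    have he : (fun k : Fin m => if k = i then (1:ℝ) else 0) ∈ simplex m := by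
      constructor
      · intro k; by_cases hk : k = i <;> simp [hk]
      · simp
    exact hμ.2 _ he jn rfl (fun j' => le_of_eq (by rw [hc j']))
  set v := pay uL (xs i0) jn with hdefv
  have hdom : ∀ x' ∈ simplex m, ∀ j' ∈ BR (tuFg m₁ μ jn g) x', pay uL x' j' ≤ v :=
    hSSE0.2.2
  -- a critical point always puts positive mass on its low coordinate
  have hposΓ : ∀ (γv : Fin m → ℝ) (i' : Fin m), (i' : ℕ) < m₁ - 1 →
      ∀ x : Fin m → ℝ, x ∈ GammaSet m₁ i' → x ∈ finv m₁ μ jn γv → 0 < x i' := by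
    intro γv i' hi' x hxΓ hxf
    rcases ((simplex_mem hxΓ.1).1 i').lt_or_eq with hlt | heq
    · exact hlt
    · exfalso
      refine lowpos hj1 γv hxf ?_
      refine Finset.sum_eq_zero fun k hk => ?_
      simp only [Lf, Finset.mem_filter] at hk
      by_cases hki : k = i'
      · subst hki; exact heq.symm
      · exact gamma_low_zero hi' hxΓ k hk.2 hki
  obtain ⟨hyΓf, hymin⟩ := hxs i hi
  obtain ⟨hyΓ, hyf⟩ := hyΓf
  set m0 := xs i i with hdefm0
  have hm0pos : 0 < m0 := hposΓ g i hi (xs i) hyΓ hyf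
  -- m0 < 1
  have hm0lt1 : m0 < 1 := by
    have hm1m : m₁ - 1 < m := by omega
    set h0 : Fin m := ⟨m₁ - 1, hm1m⟩ with hdefh0
    set hvec : Fin m → ℝ := fun k => if k = h0 then 1 else 0 with hdefhv
    have hnn : ∀ k, 0 ≤ hvec k := fun k => by by_cases hk : k = h0 <;> simp [hdefhv, hk]
    have hlowv : ∀ k : Fin m, (k:ℕ) < m₁ - 1 → hvec k = 0 := by
      intro k hk
      have hne : k ≠ h0 := by
        intro he; rw [he] at hk; simp only [hdefh0] at hk; omega
      simp [hdefhv, hne]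
    have hsumv : ∑ k, hvec k = 1 := by simp [hdefhv]
    have hne : (Finset.univ : Finset (Fin n)).Nonempty := ⟨jn, Finset.mem_univ _⟩
    set Q := (Finset.univ.sup' hne fun j => μ h0 j) - Wmin μ with hdefQ
    have hQ1 : 1 ≤ Q := by
      have h1 := Finset.le_sup' (fun j => μ h0 j) (Finset.mem_univ jn)
      have h2 := Wlb μ h0 jn
      rw [hdefQ]; linarith
    have hQle : ∀ j, j ≠ jn → ∑ k, hvec k * μ k j ≤ (Q + Wmin μ) * 1 := by
      intro j _
      have hμsum : ∑ k, hvec k * μ k j = μ h0 j := by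
        rw [hdefhv]
        rw [Finset.sum_eq_single h0 (fun k _ hk => by simp [hk]) (fun hc => absurd (Finset.mem_univ h0) hc)]
        simp
      have h1 := Finset.le_sup' (fun j' => μ h0 j') (Finset.mem_univ j)
      rw [hμsum, mul_one, hdefQ]; linarith
    obtain ⟨z, hz, hzi⟩ := Zmem μ jn g hi (hg i hi) hvec hnn hlowv 1 hsumv one_pos Q
      (by linarith) hQle
    have hmin := hymin z hz
    rw [hzi] at hmin
    have hlt : Q / (g i + Q) < 1 := by
      rw [div_lt_one (by linarith [hg i hi])]; linarith [hg i hi]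
    linarith
  have hvltMn : v < Mn := by
    have hpay0 : pay uL (xs i0) jn = Mn - xs i0 i0 * (Mn - uL i0 jn) :=
      gamma_pay uL jn Mn hhigh hi0low (hxs i0 hi0low).1.1
    have hp := hposΓ g i0 hi0low (xs i0) (hxs i0 hi0low).1.1 (hxs i0 hi0low).1.2
    have hd0 : 0 < Mn - uL i0 jn := sub_pos.2 (hlow i0 hi0low)
    have h1 : 0 < xs i0 i0 * (Mn - uL i0 jn) := mul_pos hp hd0
    rw [hdefv, hpay0]; linarith
  have hyvlt : pay uL (xs i) jn < v := by
    by_contra hge; push_neg at hge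
    exact hiI ⟨hyΓ.1, hyf.2, fun x' hx' j' hj' => le_trans (hdom x' hx' j' hj') hge⟩
  have hypay : pay uL (xs i) jn = Mn - m0 * (Mn - uL i jn) :=
    gamma_pay uL jn Mn hhigh hi hyΓ
  have hd : 0 < Mn - uL i jn := sub_pos.2 (hlow i hi)
  set tstar := (Mn - v) / (Mn - uL i jn) with hdefts
  have htspos : 0 < tstar := div_pos (by linarith) hd
  have htsd : tstar * (Mn - uL i jn) = Mn - v := div_mul_cancel₀ _ (ne_of_gt hd)
  have htsm0 : tstar < m0 := by
    rw [hdefts, div_lt_iff₀ hd]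
    linarith [hypay, hyvlt]
  have hts1 : tstar < 1 := lt_trans htsm0 hm0lt1
  set c := g i * m0 / (1 - m0) with hdefc
  have hcpos : 0 < c := div_pos (mul_pos (hg i hi) hm0pos) (by linarith)
  have hceq : c * (1 - m0) = g i * m0 := div_mul_cancel₀ _ (by linarith : (1:ℝ) - m0 ≠ 0)
  have hgicpos : 0 < g i + c := by linarith [hg i hi]
  have hm0c : m0 = c / (g i + c) := by
    rw [eq_div_iff (ne_of_gt hgicpos)]; linear_combination -hceq
  set gstar := c * (1 - tstar) / tstar with hdefgs
  have hgspos : 0 < gstar := div_pos (mul_pos hcpos (by linarith)) htspos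
  have hgsts : gstar * tstar = c * (1 - tstar) := div_mul_cancel₀ _ (ne_of_gt htspos)
  have hgsge : g i ≤ gstar := by
    have e1 : g i * (tstar * m0) = c * tstar - c * tstar * m0 := by
      linear_combination -tstar * hceq
    have e2 : gstar * (tstar * m0) = c * m0 - c * tstar * m0 := by
      linear_combination m0 * hgsts
    have h3 : c * tstar ≤ c * m0 := mul_le_mul_of_nonneg_left htsm0.le hcpos.le
    have h2 : g i * (tstar * m0) ≤ gstar * (tstar * m0) := by
      rw [e1, e2]; linarith [h3]
    exact le_of_mul_le_mul_right h2 (mul_pos htspos hm0pos)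
  have hgc : (gstar + c) * tstar = c := by linear_combination hgsts
  have hgcpos : 0 < gstar + c := by linarith
  have hteq : c / (gstar + c) = tstar := by
    rw [div_eq_iff (ne_of_gt hgcpos)]; linarith [hgc]
  -- Lemma C: every high-supported distribution has some response at least c + W
  have lemC : ∀ h : Fin m → ℝ, (∀ k, 0 ≤ h k) → (∀ k : Fin m, (k:ℕ) < m₁ - 1 → h k = 0) →
      ∀ S : ℝ, ∑ k, h k = S → 0 < S →
      ∃ j, j ≠ jn ∧ (c + Wmin μ) * S ≤ ∑ k, h k * μ k j := by
    intro h hh0 hhlow S hS hSpos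
    obtain ⟨j1, hj1'⟩ := hj1
    have hWS : ∀ j : Fin n, (Wmin μ + 1) * S ≤ ∑ k, h k * μ k j := by
      intro j
      calc (Wmin μ + 1) * S = ∑ k, h k * (Wmin μ + 1) := by
            rw [← hS, Finset.mul_sum]; exact Finset.sum_congr rfl fun k _ => mul_comm _ _
        _ ≤ ∑ k, h k * μ k j :=
            Finset.sum_le_sum fun k _ => mul_le_mul_of_nonneg_left (Wlb μ k j) (hh0 k)
    rcases le_or_gt c 1 with hc1 | hc1
    · refine ⟨j1, hj1', ?_⟩
      have h1 := hWS j1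
      have h2 : 0 ≤ (1 - c) * S := mul_nonneg (by linarith) hSpos.le
      nlinarith [h1, h2]
    · by_contra hcon; push_neg at hcon
      have hmem1 : j1 ∈ Finset.univ.erase jn := Finset.mem_erase.2 ⟨hj1', Finset.mem_univ _⟩
      have hne : (Finset.univ.erase jn).Nonempty := ⟨j1, hmem1⟩
      set Q := (Finset.univ.erase jn).sup' hne
          (fun j => (∑ k, h k * μ k j) / S - Wmin μ) with hdefQ
      have hQge1 : 1 ≤ Q := by
        refine le_trans ?_
          (Finset.le_sup' (fun j => (∑ k, h k * μ k j) / S - Wmin μ) hmem1)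
        have := hWS j1
        rw [le_sub_iff_add_le, le_div_iff₀ hSpos]; linarith
      have hQltc : Q < c := by
        rw [hdefQ, Finset.sup'_lt_iff]
        intro j hj
        rw [Finset.mem_erase] at hj
        have := hcon j hj.1
        rw [sub_lt_iff_lt_add, div_lt_iff₀ hSpos]; linarith [hcon j hj.1]
      have hQle : ∀ j, j ≠ jn → ∑ k, h k * μ k j ≤ (Q + Wmin μ) * S := by
        intro j hj
        have hle : (∑ k, h k * μ k j) / S - Wmin μ ≤ Q :=
          Finset.le_sup' (fun j => (∑ k, h k * μ k j) / S - Wmin μ)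
            (Finset.mem_erase.2 ⟨hj, Finset.mem_univ _⟩)
        rw [sub_le_iff_le_add] at hle
        rw [div_le_iff₀ hSpos] at hle
        linarith [hle]
      obtain ⟨z, hz, hzi⟩ := Zmem μ jn g hi (hg i hi) h hh0 hhlow S hS hSpos Q
        (by linarith) hQle
      have hmin := hymin z hz
      rw [hzi] at hmin
      have hmono : Q / (g i + Q) < c / (g i + c) := by
        rw [div_lt_div_iff₀ (by linarith [hg i hi]) hgicpos]
        have := mul_lt_mul_of_pos_right hQltc (hg i hi)
        nlinarith [this]
      rw [← hm0c] at hmono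
      linarith
  refine ⟨gstar, hgspos, ?_⟩
  intro xs' hxs'
  set g' := Function.update g i gstar with hdefg'
  have hg'i : g' i = gstar := Function.update_self i gstar g
  have hg' : ∀ k : Fin m, (k:ℕ) < m₁ - 1 → 0 < g' k := by
    intro k hk
    by_cases hki : k = i
    · subst hki; rw [hg'i]; exact hgspos
    · rw [hdefg', Function.update_of_ne hki]; exact hg k hk
  obtain ⟨hy'Γf, hy'min⟩ := hxs' i hi
  obtain ⟨hy'Γ, hy'f⟩ := hy'Γf
  -- the new critical point for i sits exactly at tstar
  have hy'ge : tstar ≤ xs' i i := by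
    set t := xs' i i with hdeft'
    rcases lt_or_ge t 1 with hlt | hge
    · have hHfx : ∑ k ∈ Hf m m₁, xs' i k = 1 - t := by
        rw [← Hf_eq]; exact hy'Γ.2.symm
      set h : Fin m → ℝ := fun k => if (k:ℕ) < m₁ - 1 then 0 else xs' i k with hdefh
      have hh0 : ∀ k, 0 ≤ h k := by
        intro k; by_cases hk : (k:ℕ) < m₁ - 1 <;>
          simp [hdefh, hk, (simplex_mem hy'Γ.1).1 k]
      have hhlow : ∀ k : Fin m, (k:ℕ) < m₁ - 1 → h k = 0 := fun k hk => by simp [hdefh, hk]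
      have hhsum : ∑ k, h k = 1 - t := by
        rw [sum_split m m₁ h]
        have h1 : ∑ k ∈ Lf m m₁, h k = 0 := Finset.sum_eq_zero fun k hk => by
          simp only [Lf, Finset.mem_filter] at hk; exact hhlow k hk.2
        have h2 : ∑ k ∈ Hf m m₁, h k = ∑ k ∈ Hf m m₁, xs' i k := by
          refine Finset.sum_congr rfl fun k hk => ?_
          simp only [Hf, Finset.mem_filter] at hk
          simp [hdefh, hk.2]
        rw [h1, h2, hHfx, zero_add]
      obtain ⟨j, hjne, hjge⟩ := lemC h hh0 hhlow (1 - t) hhsum (by linarith)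
      have hBR := hy'f.2 j
      rw [payB m₁ μ jn g' (xs' i) j hjne, payA m₁ μ jn g' (xs' i)] at hBR
      have hLfx : ∑ k ∈ Lf m m₁, xs' i k * g' k = t * gstar := by
        have h0 : ∑ k ∈ Lf m m₁, xs' i k * g' k = xs' i i * g' i := by
          refine Finset.sum_eq_single i (fun k hk hkne => ?_)
            (fun hc => absurd (by simp [Lf, hi] : i ∈ Lf m m₁) hc)
          simp only [Lf, Finset.mem_filter] at hk
          rw [gamma_low_zero hi hy'Γ k hk.2 hkne]; ring
        rw [h0, hg'i]
      have hμeq : ∑ k, h k * μ k j = ∑ k ∈ Hf m m₁, xs' i k * μ k j := by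
        rw [sum_split m m₁ (fun k => h k * μ k j)]
        have h1 : ∑ k ∈ Lf m m₁, h k * μ k j = 0 := Finset.sum_eq_zero fun k hk => by
          simp only [Lf, Finset.mem_filter] at hk; rw [hhlow k hk.2]; ring
        have h2 : ∑ k ∈ Hf m m₁, h k * μ k j = ∑ k ∈ Hf m m₁, xs' i k * μ k j := by
          refine Finset.sum_congr rfl fun k hk => ?_
          simp only [Hf, Finset.mem_filter] at hk
          simp [hdefh, hk.2]
        rw [h1, h2, zero_add]
      rw [← hμeq, hLfx, hHfx] at hBR
      have hkey : c * (1 - t) ≤ t * gstar := by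
        have e1 : (c + Wmin μ) * (1 - t) = c * (1 - t) + Wmin μ * (1 - t) := by ring
        have e2 : (1 - t) * Wmin μ = Wmin μ * (1 - t) := by ring
        linarith [hjge, hBR]
      have hA : c * (1 - t) * tstar ≤ t * gstar * tstar :=
        mul_le_mul_of_nonneg_right hkey htspos.le
      have hB : t * gstar * tstar = c * t - c * t * tstar := by
        linear_combination t * hgsts
      have hC : c * (1 - t) * tstar = c * tstar - c * t * tstar := by ring
      have hD : c * tstar ≤ c * t := by linarith [hA, hB, hC]
      exact le_of_mul_le_mul_left hD hcpos
    · linarith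
  have hy'le : xs' i i ≤ tstar := by
    set h : Fin m → ℝ := fun k => if k = i then 0 else xs i k with hdefh
    have hh0 : ∀ k, 0 ≤ h k := by
      intro k; by_cases hk : k = i <;> simp [hdefh, hk, (simplex_mem hyΓ.1).1 k]
    have hhlow : ∀ k : Fin m, (k:ℕ) < m₁ - 1 → h k = 0 := by
      intro k hk
      by_cases hki : k = i
      · simp [hdefh, hki]
      · simp [hdefh, hki, gamma_low_zero hi hyΓ k hk hki]
    have hHfy : ∑ k ∈ Hf m m₁, xs i k = 1 - m0 := by
      rw [← Hf_eq]; exact hyΓ.2.symm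
    have hhsum : ∑ k, h k = 1 - m0 := by
      rw [sum_split m m₁ h]
      have h1 : ∑ k ∈ Lf m m₁, h k = 0 := Finset.sum_eq_zero fun k hk => by
        simp only [Lf, Finset.mem_filter] at hk; exact hhlow k hk.2
      have h2 : ∑ k ∈ Hf m m₁, h k = ∑ k ∈ Hf m m₁, xs i k := by
        refine Finset.sum_congr rfl fun k hk => ?_
        simp only [Hf, Finset.mem_filter] at hk
        have hki : k ≠ i := fun he => hk.2 (he ▸ hi)
        simp [hdefh, hki]
      rw [h1, h2, hHfy, zero_add]
    have hQc : ∀ j, j ≠ jn → ∑ k, h k * μ k j ≤ (c + Wmin μ) * (1 - m0) := by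
      intro j hjne
      have hμeq : ∑ k, h k * μ k j = ∑ k ∈ Hf m m₁, xs i k * μ k j := by
        rw [sum_split m m₁ (fun k => h k * μ k j)]
        have h1 : ∑ k ∈ Lf m m₁, h k * μ k j = 0 := Finset.sum_eq_zero fun k hk => by
          simp only [Lf, Finset.mem_filter] at hk; rw [hhlow k hk.2]; ring
        have h2 : ∑ k ∈ Hf m m₁, h k * μ k j = ∑ k ∈ Hf m m₁, xs i k * μ k j := by
          refine Finset.sum_congr rfl fun k hk => ?_
          simp only [Hf, Finset.mem_filter] at hk
          have hki : k ≠ i := fun he => hk.2 (he ▸ hi)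
          simp [hdefh, hki]
        rw [h1, h2, zero_add]
      have hBR := hyf.2 j
      rw [payB m₁ μ jn g (xs i) j hjne, payA m₁ μ jn g (xs i)] at hBR
      have hLfg : ∑ k ∈ Lf m m₁, xs i k * g k = m0 * g i := by
        have h0 : ∑ k ∈ Lf m m₁, xs i k * g k = xs i i * g i := by
          refine Finset.sum_eq_single i (fun k hk hkne => ?_)
            (fun hc => absurd (by simp [Lf, hi] : i ∈ Lf m m₁) hc)
          simp only [Lf, Finset.mem_filter] at hk
          rw [gamma_low_zero hi hyΓ k hk.2 hkne]; ring
        rw [h0]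
      rw [hLfg, hHfy] at hBR
      rw [hμeq]
      have e1 : (c + Wmin μ) * (1 - m0) = c * (1 - m0) + Wmin μ * (1 - m0) := by ring
      have e2 : (1 - m0) * Wmin μ = Wmin μ * (1 - m0) := by ring
      linarith [hBR, hceq]
    obtain ⟨z, hz, hzi⟩ := Zmem μ jn g' hi (hg' i hi) h hh0 hhlow (1 - m0) hhsum
      (by linarith) c hcpos hQc
    have hmin := hy'min z hz
    rw [hzi, hg'i, hteq] at hmin
    exact hmin
  have hy'eq : xs' i i = tstar := le_antisymm hy'le hy'ge
  have hvi : pay uL (xs' i) jn = v := by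
    rw [gamma_pay uL jn Mn hhigh hi hy'Γ, hy'eq, htsd]; ring
  -- for i' ≠ i the constraint sets, critical coordinates and values are unchanged
  have hsets : ∀ i' : Fin m, (i':ℕ) < m₁ - 1 → i' ≠ i →
      GammaSet m₁ i' ∩ finv m₁ μ jn g' = GammaSet m₁ i' ∩ finv m₁ μ jn g := by
    intro i' hi' hne
    rw [hdefg']
    exact gamma_finv_update m₁ μ jn g hi hi' (Ne.symm hne) gstar
  have hcoordeq : ∀ i' : Fin m, (i':ℕ) < m₁ - 1 → i' ≠ i → xs' i' i' = xs i' i' := by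
    intro i' hi' hne
    have hmem1 : xs i' ∈ GammaSet m₁ i' ∩ finv m₁ μ jn g' := by
      rw [hsets i' hi' hne]; exact (hxs i' hi').1
    have hmem2 : xs' i' ∈ GammaSet m₁ i' ∩ finv m₁ μ jn g := by
      rw [← hsets i' hi' hne]; exact (hxs' i' hi').1
    have h1 := (hxs' i' hi').2 (xs i') hmem1
    have h2 := (hxs i' hi').2 (xs' i') hmem2
    linarith
  have hpayeq : ∀ i' : Fin m, (i':ℕ) < m₁ - 1 → i' ≠ i →
      pay uL (xs' i') jn = pay uL (xs i') jn := by
    intro i' hi' hne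
    rw [gamma_pay uL jn Mn hhigh hi' (hxs' i' hi').1.1,
      gamma_pay uL jn Mn hhigh hi' (hxs i' hi').1.1, hcoordeq i' hi' hne]
  have hvk : ∀ k : Fin m, (k:ℕ) < m₁ - 1 → pay uL (xs' k) jn ≤ v := by
    intro k hk
    by_cases hki : k = i
    · subst hki; rw [hvi]
    · rw [hpayeq k hk hki]
      exact hdom (xs k) (hxs k hk).1.1.1 jn (hxs k hk).1.2.2
  have hvk' : ∀ k : Fin m, (k:ℕ) < m₁ - 1 → Mn - v ≤ xs' k k * (Mn - uL k jn) := by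
    intro k hk
    have := hvk k hk
    rw [gamma_pay uL jn Mn hhigh hk (hxs' k hk).1.1] at this
    linarith
  -- Lemma D: on f_{g'}^{-1}(jn) the leader payoff in column jn is at most v
  have lemD : ∀ x, x ∈ finv m₁ μ jn g' → pay uL x jn ≤ v := by
    intro x hxf
    have hnn := (simplex_mem hxf.1).1
    have hsum1 := (simplex_mem hxf.1).2
    have hsplit := sum_split m m₁ x
    have hσLnn : 0 ≤ ∑ k ∈ Lf m m₁, x k :=
      Finset.sum_nonneg fun k _ => hnn k
    have hσHnn : 0 ≤ ∑ k ∈ Hf m m₁, x k :=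
      Finset.sum_nonneg fun k _ => hnn k
    rw [payuL m₁ uL jn Mn hhigh x hsum1]
    have himem : i ∈ Lf m m₁ := by simp [Lf, hi]
    rcases hσHnn.lt_or_eq with hHpos | hH0
    · -- positive mass on high actions
      set h : Fin m → ℝ := fun k => if (k:ℕ) < m₁ - 1 then 0 else x k with hdefh
      have hh0 : ∀ k, 0 ≤ h k := by
        intro k; by_cases hk : (k:ℕ) < m₁ - 1 <;> simp [hdefh, hk, hnn k]
      have hhlow : ∀ k : Fin m, (k:ℕ) < m₁ - 1 → h k = 0 := fun k hk => by simp [hdefh, hk]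
      have hhsum : ∑ k, h k = ∑ k ∈ Hf m m₁, x k := by
        rw [sum_split m m₁ h]
        have h1 : ∑ k ∈ Lf m m₁, h k = 0 := Finset.sum_eq_zero fun k hk => by
          simp only [Lf, Finset.mem_filter] at hk; exact hhlow k hk.2
        have h2 : ∑ k ∈ Hf m m₁, h k = ∑ k ∈ Hf m m₁, x k := by
          refine Finset.sum_congr rfl fun k hk => ?_
          simp only [Hf, Finset.mem_filter] at hk
          simp [hdefh, hk.2]
        rw [h1, h2, zero_add]
      have hμsum : ∀ j : Fin n, ∑ k, h k * μ k j = ∑ k ∈ Hf m m₁, x k * μ k j := by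
        intro j
        rw [sum_split m m₁ (fun k => h k * μ k j)]
        have h1 : ∑ k ∈ Lf m m₁, h k * μ k j = 0 := Finset.sum_eq_zero fun k hk => by
          simp only [Lf, Finset.mem_filter] at hk; rw [hhlow k hk.2]; ring
        have h2 : ∑ k ∈ Hf m m₁, h k * μ k j = ∑ k ∈ Hf m m₁, x k * μ k j := by
          refine Finset.sum_congr rfl fun k hk => ?_
          simp only [Hf, Finset.mem_filter] at hk
          simp [hdefh, hk.2]
        rw [h1, h2, zero_add]
      obtain ⟨j1, hj1'⟩ := hj1
      have hmem1 : j1 ∈ Finset.univ.erase jn := Finset.mem_erase.2 ⟨hj1', Finset.mem_univ _⟩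
      have hne : (Finset.univ.erase jn).Nonempty := ⟨j1, hmem1⟩
      set σH := ∑ k ∈ Hf m m₁, x k with hdefσH
      set Q := (Finset.univ.erase jn).sup' hne
          (fun j => (∑ k, h k * μ k j) / σH - Wmin μ) with hdefQ
      have hWS : ∀ j : Fin n, (Wmin μ + 1) * σH ≤ ∑ k, h k * μ k j := by
        intro j
        calc (Wmin μ + 1) * σH = ∑ k, h k * (Wmin μ + 1) := by
              rw [← hhsum, Finset.mul_sum]; exact Finset.sum_congr rfl fun k _ => mul_comm _ _
          _ ≤ ∑ k, h k * μ k j :=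
              Finset.sum_le_sum fun k _ => mul_le_mul_of_nonneg_left (Wlb μ k j) (hh0 k)
      have hQge1 : 1 ≤ Q := by
        refine le_trans ?_
          (Finset.le_sup' (fun j => (∑ k, h k * μ k j) / σH - Wmin μ) hmem1)
        have := hWS j1
        rw [le_sub_iff_add_le, le_div_iff₀ hHpos]; linarith
      have hQpos : (0:ℝ) < Q := by linarith
      have hQle : ∀ j, j ≠ jn → ∑ k, h k * μ k j ≤ (Q + Wmin μ) * σH := by
        intro j hj
        have hle : (∑ k, h k * μ k j) / σH - Wmin μ ≤ Q :=
          Finset.le_sup' (fun j => (∑ k, h k * μ k j) / σH - Wmin μ)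
            (Finset.mem_erase.2 ⟨hj, Finset.mem_univ _⟩)
        rw [sub_le_iff_le_add] at hle
        rw [div_le_iff₀ hHpos] at hle
        linarith [hle]
      have hfeas : Q * σH ≤ ∑ k ∈ Lf m m₁, x k * g' k := by
        obtain ⟨jm, hjm, hjeq⟩ := Finset.exists_mem_eq_sup' hne
          (fun j => (∑ k, h k * μ k j) / σH - Wmin μ)
        rw [Finset.mem_erase] at hjm
        have hBR := hxf.2 jm
        rw [payB m₁ μ jn g' x jm hjm.1, payA m₁ μ jn g' x] at hBR
        have hQval : Q * σH = ∑ k, h k * μ k jm - Wmin μ * σH := by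
          rw [hdefQ, hjeq, sub_mul, div_mul_cancel₀ _ (ne_of_gt hHpos)]
        rw [hQval, hμsum jm]
        linarith [hBR]
      obtain ⟨k0, hk0mem, hk0min⟩ := Finset.exists_min_image (Lf m m₁)
        (fun k => Q / (g' k + Q) * (Mn - uL k jn)) ⟨i, himem⟩
      have hk0low : (k0:ℕ) < m₁ - 1 := by
        simp only [Lf, Finset.mem_filter] at hk0mem; exact hk0mem.2
      have hden : ∀ k : Fin m, (k:ℕ) < m₁ - 1 → 0 < g' k + Q := fun k hk => by
        linarith [hg' k hk]
      set t0 := Q / (g' k0 + Q) with hdeft0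
      have ht0pos : 0 < t0 := div_pos hQpos (hden k0 hk0low)
      have hd0pos : 0 < Mn - uL k0 jn := sub_pos.2 (hlow k0 hk0low)
      obtain ⟨z, hz, hzi⟩ := Zmem μ jn g' hk0low (hg' k0 hk0low) h hh0 hhlow σH hhsum
        hHpos Q hQpos hQle
      have hmin := (hxs' k0 hk0low).2 z hz
      rw [hzi] at hmin
      have key1 : ∀ k ∈ Lf m m₁, x k * (g' k + Q) / Q * (t0 * (Mn - uL k0 jn))
          ≤ x k * (Mn - uL k jn) := by
        intro k hk
        have hklow : (k:ℕ) < m₁ - 1 := by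
          simp only [Lf, Finset.mem_filter] at hk; exact hk.2
        have h1 : t0 * (Mn - uL k0 jn) ≤ Q / (g' k + Q) * (Mn - uL k jn) := hk0min k hk
        have hrnn : 0 ≤ x k * (g' k + Q) / Q :=
          div_nonneg (mul_nonneg (hnn k) (hden k hklow).le) hQpos.le
        calc x k * (g' k + Q) / Q * (t0 * (Mn - uL k0 jn))
            ≤ x k * (g' k + Q) / Q * (Q / (g' k + Q) * (Mn - uL k jn)) :=
              mul_le_mul_of_nonneg_left h1 hrnn
          _ = x k * (Mn - uL k jn) := by
              have hq1 : Q ≠ 0 := ne_of_gt hQpos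
              have hq2 : g' k + Q ≠ 0 := ne_of_gt (hden k hklow)
              field_simp
      have key2 : 1 ≤ ∑ k ∈ Lf m m₁, x k * (g' k + Q) / Q := by
        have heq1 : ∑ k ∈ Lf m m₁, x k * (g' k + Q) / Q
            = ((∑ k ∈ Lf m m₁, x k * g' k) + (∑ k ∈ Lf m m₁, x k) * Q) / Q := by
          rw [← Finset.sum_div]
          congr 1
          rw [Finset.sum_mul, ← Finset.sum_add_distrib]
          exact Finset.sum_congr rfl fun k _ => by ring
        rw [heq1, le_div_iff₀ hQpos, one_mul]
        have hssum : (∑ k ∈ Lf m m₁, x k) + σH = 1 := by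
          rw [hdefσH]; linarith [hsplit, hsum1]
        have hQsplit : Q * (∑ k ∈ Lf m m₁, x k) + Q * σH = Q := by
          have h9 := congrArg (fun r => Q * r) hssum
          simpa [mul_add] using h9
        linarith [hfeas, hQsplit]
      have hsumnn : 0 ≤ t0 * (Mn - uL k0 jn) := (mul_pos ht0pos hd0pos).le
      have hchain : Mn - v ≤ ∑ k ∈ Lf m m₁, x k * (Mn - uL k jn) := by
        calc Mn - v ≤ xs' k0 k0 * (Mn - uL k0 jn) := hvk' k0 hk0low
          _ ≤ t0 * (Mn - uL k0 jn) := mul_le_mul_of_nonneg_right hmin hd0pos.le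
          _ = 1 * (t0 * (Mn - uL k0 jn)) := (one_mul _).symm
          _ ≤ (∑ k ∈ Lf m m₁, x k * (g' k + Q) / Q) * (t0 * (Mn - uL k0 jn)) :=
              mul_le_mul_of_nonneg_right key2 hsumnn
          _ = ∑ k ∈ Lf m m₁, x k * (g' k + Q) / Q * (t0 * (Mn - uL k0 jn)) :=
              Finset.sum_mul _ _ _
          _ ≤ ∑ k ∈ Lf m m₁, x k * (Mn - uL k jn) := Finset.sum_le_sum key1
      linarith
    · -- no mass on high actions
      obtain ⟨k0, hk0mem, hk0min⟩ := Finset.exists_min_image (Lf m m₁)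
        (fun k => Mn - uL k jn) ⟨i, himem⟩
      have hk0low : (k0:ℕ) < m₁ - 1 := by
        simp only [Lf, Finset.mem_filter] at hk0mem; exact hk0mem.2
      have hd0pos : 0 < Mn - uL k0 jn := sub_pos.2 (hlow k0 hk0low)
      have hσL1 : ∑ k ∈ Lf m m₁, x k = 1 := by rw [← hH0] at hsplit; linarith
      have hcle1 : xs' k0 k0 ≤ 1 := by
        have hs := (simplex_mem (hxs' k0 hk0low).1.1.1).2
        have := Finset.single_le_sum
          (f := xs' k0) (fun k _ => (simplex_mem (hxs' k0 hk0low).1.1.1).1 k)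
          (Finset.mem_univ k0)
        linarith
      have hchain : Mn - v ≤ ∑ k ∈ Lf m m₁, x k * (Mn - uL k jn) := by
        calc Mn - v ≤ xs' k0 k0 * (Mn - uL k0 jn) := hvk' k0 hk0low
          _ ≤ 1 * (Mn - uL k0 jn) := mul_le_mul_of_nonneg_right hcle1 hd0pos.le
          _ = (∑ k ∈ Lf m m₁, x k) * (Mn - uL k0 jn) := by rw [hσL1]
          _ = ∑ k ∈ Lf m m₁, x k * (Mn - uL k0 jn) := Finset.sum_mul _ _ _
          _ ≤ ∑ k ∈ Lf m m₁, x k * (Mn - uL k jn) :=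
              Finset.sum_le_sum fun k hk =>
                mul_le_mul_of_nonneg_left (hk0min k hk) (hnn k)
      linarith
  -- every (x', j') with j' a best response to g' yields leader payoff at most v
  have hdom' : ∀ x' ∈ simplex m, ∀ j' ∈ BR (tuFg m₁ μ jn g') x', pay uL x' j' ≤ v := by
    intro x' hx' j' hj'
    by_cases hjj : j' = jn
    · subst hjj; exact lemD x' ⟨hx', hj'⟩
    · have hmono : ∀ j'' : Fin n, pay (tuFg m₁ μ jn g) x' j'' ≤ pay (tuFg m₁ μ jn g') x' j'' := by
        intro j''
        unfold pay
        refine Finset.sum_le_sum fun k _ => ?_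
        have hxk := (simplex_mem hx').1 k
        refine mul_le_mul_of_nonneg_left ?_ hxk
        unfold tuFg
        by_cases hjn : j'' = jn
        · rw [if_pos hjn, if_pos hjn]
          by_cases hklow : (k:ℕ) < m₁ - 1
          · rw [if_pos hklow, if_pos hklow]
            by_cases hki : k = i
            · subst hki; rw [hg'i]; exact hgsge
            · rw [hdefg', Function.update_of_ne hki]
          · rw [if_neg hklow, if_neg hklow]
        · rw [if_neg hjn, if_neg hjn]
      have hcoleq : pay (tuFg m₁ μ jn g') x' j' = pay (tuFg m₁ μ jn g) x' j' := by
        unfold pay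
        refine Finset.sum_congr rfl fun k _ => ?_
        unfold tuFg
        rw [if_neg hjj, if_neg hjj]
      have hj'g : j' ∈ BR (tuFg m₁ μ jn g) x' := by
        intro j''
        calc pay (tuFg m₁ μ jn g) x' j'' ≤ pay (tuFg m₁ μ jn g') x' j'' := hmono j''
          _ ≤ pay (tuFg m₁ μ jn g') x' j' := hj' j''
          _ = pay (tuFg m₁ μ jn g) x' j' := hcoleq
      exact hdom x' hx' j' hj'g
  -- final set equality
  ext i'
  simp only [Set.mem_setOf_eq, Set.mem_union, Set.mem_singleton_iff]
  constructor
  · rintro ⟨hi'low, hS'⟩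
    by_cases hii : i' = i
    · exact Or.inr hii
    · refine Or.inl ⟨hi'low, ?_⟩
      have h2 := hS'.2.2 (xs' i) hy'Γ.1 jn hy'f.2
      rw [hvi, hpayeq i' hi'low hii] at h2
      exact ⟨(hxs i' hi'low).1.1.1, (hxs i' hi'low).1.2.2,
        fun x' hx' j' hj' => le_trans (hdom x' hx' j' hj') h2⟩
  · rintro (⟨hi'low, hS⟩ | hii)
    · by_cases hii : i' = i
      · rw [hii] at hS; exact absurd hS hiI
      · refine ⟨hi'low, ?_⟩
        have hge : v ≤ pay uL (xs i') jn :=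
          hS.2.2 (xs i0) (hxs i0 hi0low).1.1.1 jn (hxs i0 hi0low).1.2.2
        have hval : v ≤ pay uL (xs' i') jn := by
          rw [hpayeq i' hi'low hii]; exact hge
        exact ⟨(hxs' i' hi'low).1.1.1, (hxs' i' hi'low).1.2.2,
          fun x' hx' j' hj' => le_trans (hdom' x' hx' j' hj') hval⟩
    · subst hii
      exact ⟨hi, hy'Γ.1, hy'f.2,
        fun x' hx' j' hj' => by rw [hvi]; exact hdom' x' hx' j' hj'⟩
end
end

section
/- Let S ⊆ [n] be nonempty with S ≠ [n], and suppose for each j ∈ [n]\S there are b_j ∈ ℝ^m and c_j ∈ ℝ such that for all x ∈ Δ_m: u^L(x,j) ≥ M_S if and only if b_j·x ≤ c_j. Define μ(x,j) = 0 for j ∈ S and μ(x,j) = b_j·x − c_j for j ∈ [n]\S. Then: (1) μ is a cover of S with respect to u^L if and only if there is no x ∈ 𝓜_S with μ(x,j) ≤ 0 for all j ∈ [n]; and (2) if μ is not a cover of S, then no cover of S with respect to u^L exists. -/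
open scoped Classical
open Finset

noncomputable section

/-- The candidate cover μ built from the hyperplanes (b_j, c_j):
μ(x,j) = 0 for j ∈ S, and μ(x,j) = b_j·x − c_j otherwise
(as a matrix; the linear extension agrees on Δ_m). -/
def muBC {m n : ℕ} (S : Set (Fin n)) (b : Fin n → Fin m → ℝ) (c : Fin n → ℝ) :
    Fin m → Fin n → ℝ :=
  fun i j => if j ∈ S then 0 else b j i - c j

/-- (1) μ is a cover of S iff there is no x ∈ 𝓜_S with μ(x,j) ≤ 0 for all j;
(2) if μ is not a cover of S, then no cover of S exists at all. -/
theorem muBC_cover_characterization {m n : ℕ} (hm : 0 < m) (hn : 0 < n)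
    (uL : Fin m → Fin n → ℝ)
    (S : Set (Fin n)) (hS : S.Nonempty) (hSne : S ≠ Set.univ)
    (b : Fin n → Fin m → ℝ) (c : Fin n → ℝ)
    (hbc : ∀ j ∉ S, ∀ x ∈ simplex m,
      (Mval uL S ≤ pay uL x j ↔ dot (b j) x ≤ c j)) :
    (IsCover uL (muBC S b c) S ↔
      ¬ ∃ x ∈ argMM uL S, ∀ j : Fin n, pay (muBC S b c) x j ≤ 0) ∧
    (¬ IsCover uL (muBC S b c) S →
      ∀ μ' : Fin m → Fin n → ℝ, ¬ IsCover uL μ' S) := by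

  -- payoff facts for muBC
  have hpayS : ∀ (x : Fin m → ℝ), ∀ j ∈ S, pay (muBC S b c) x j = 0 := by
    intro x j hj
    simp [pay, muBC, hj]
  have hpayN : ∀ x ∈ simplex m, ∀ j ∉ S,
      pay (muBC S b c) x j = dot (b j) x - c j := by
    intro x hx j hj
    have hsum : ∑ i, x i = 1 := hx.2
    have h1 : ∀ i : Fin m, x i * (b j i - c j) = b j i * x i - x i * c j :=
      fun i => by ring
    simp only [pay, muBC, hj, if_false, dot]
    rw [Finset.sum_congr rfl (fun i _ => h1 i), Finset.sum_sub_distrib,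
      ← Finset.sum_mul, hsum, one_mul]
  have hMle : ∀ x ∈ argMM uL S, ∀ j ∈ S, Mval uL S ≤ pay uL x j := by
    intro x hx j hj
    have hbdd : BddBelow ((fun j => pay uL x j) '' S) :=
      (S.toFinite.image _).bddBelow
    have := csInf_le hbdd (Set.mem_image_of_mem _ hj)
    rw [show sInf ((fun j => pay uL x j) '' S) = minOnS uL S x from rfl, hx.2] at this
    exact this
  have key : IsCover uL (muBC S b c) S ↔
      ¬ ∃ x ∈ argMM uL S, ∀ j : Fin n, pay (muBC S b c) x j ≤ 0 := by
    constructor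
    · rintro hc ⟨x, hx, hall⟩
      obtain ⟨j0, hj0⟩ := hS
      have hbr : j0 ∈ BR (muBC S b c) x := by
        intro j'
        rw [hpayS x j0 hj0]
        exact hall j'
      have := hc x hx j0 hbr
      exact absurd (hMle x hx j0 hj0) (not_le.mpr this)
    · intro hne x hx j hj
      have hex : ∃ j' : Fin n, 0 < pay (muBC S b c) x j' := by
        by_contra h
        push_neg at h
        exact hne ⟨x, hx, fun j' => h j'⟩
      obtain ⟨j', hj'⟩ := hex
      have hjpos : 0 < pay (muBC S b c) x j := lt_of_lt_of_le hj' (hj j')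
      have hjS : j ∉ S := by
        intro hjS
        rw [hpayS x j hjS] at hjpos
        exact lt_irrefl _ hjpos
      rw [hpayN x hx.1 j hjS] at hjpos
      have : ¬ dot (b j) x ≤ c j := by linarith
      have := (not_iff_not.mpr (hbc j hjS x hx.1)).mpr this
      exact not_le.mp this
  refine ⟨key, ?_⟩
  intro hnc μ'
  rw [key, not_not] at hnc
  obtain ⟨x, hx, hall⟩ := hnc
  intro hc'
  obtain ⟨j, -, hj⟩ := Finset.exists_max_image Finset.univ (pay μ' x)
    ⟨⟨0, hn⟩, Finset.mem_univ _⟩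
  have hbr : j ∈ BR μ' x := fun j' => hj j' (Finset.mem_univ _)
  have hlt := hc' x hx j hbr
  have hge : Mval uL S ≤ pay uL x j := by
    by_cases hjS : j ∈ S
    · exact hMle x hx j hjS
    · have := hall j
      rw [hpayN x hx.1 j hjS] at this
      exact (hbc j hjS x hx.1).mpr (by linarith)
  exact absurd hge (not_le.mpr hlt)
end
end
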